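/- arXiv:1610.01987 — 5 statements merged into one kernel-verified Lean document; each statement's English description precedes it below -/
import Mathlib

section
/- For every integer n ≥ 1 and every j ∈ {1,…,n}, the number of arrangements of {1,…,n} that avoid all patterns 12, 23, …, (n−1)n, n1 and whose first digit σ(1) equals j is exactly Der_{n−1}. In particular these arrangements are equidistributed: every class (set of such arrangements with a fixed first digit) has the same cardinality Der_{n−1}. -/
/-- The arrangement (one-line notation) of `σ` avoids all patterns
`12, 23, …, (n-1)n`: digit `i` (encoded as the value `i-1` in `Fin n`)
is never immediately followed by digit `i+1`. -/
def avoidsSucc (n : ℕ) (σ : Equiv.Perm (Fin n)) : Prop :=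
  ∀ (k : ℕ) (h : k + 1 < n),
    (σ ⟨k + 1, h⟩).val ≠ (σ ⟨k, Nat.lt_of_succ_lt h⟩).val + 1

/-- The arrangement of `σ` contains the pattern `n1`: digit `n` (value `n-1`)
is immediately followed by digit `1` (value `0`). -/
def containsN1 (n : ℕ) (σ : Equiv.Perm (Fin n)) : Prop :=
  ∃ (k : ℕ) (h : k + 1 < n),
    (σ ⟨k, Nat.lt_of_succ_lt h⟩).val = n - 1 ∧ (σ ⟨k + 1, h⟩).val = 0

/-- `dCount n` = number of arrangements of `{1,…,n}` avoiding `12, 23, …, (n-1)n`. -/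
noncomputable def dCount (n : ℕ) : ℕ :=
  Nat.card {σ : Equiv.Perm (Fin n) // avoidsSucc n σ}

/-- `DCount n` = number of arrangements of `{1,…,n}` avoiding `12, 23, …, (n-1)n, n1`. -/
noncomputable def DCount (n : ℕ) : ℕ :=
  Nat.card {σ : Equiv.Perm (Fin n) // avoidsSucc n σ ∧ ¬ containsN1 n σ}

open List

/-! ### Utilities -/

def RR (a b : ℕ) : Prop := b ≠ a + 1

def okW (m : ℕ) (w : List ℕ) : Prop := w.Perm (List.range m) ∧ w.IsChain RR

def okA (m : ℕ) (w : List ℕ) : Prop := okW m w ∧ w.head? ≠ some 0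

abbrev Wt (m : ℕ) := {w : List ℕ // okW m w}
abbrev At (m : ℕ) := {w : List ℕ // okA m w}

lemma perm_range_iff {w : List ℕ} {m : ℕ} :
    w.Perm (List.range m) ↔ w.Nodup ∧ w.length = m ∧ ∀ x ∈ w, x < m := by
  constructor
  · intro h
    refine ⟨h.nodup_iff.mpr (nodup_range (n := m)), by simpa using h.length_eq, fun x hx => ?_⟩
    simpa using h.subset hx
  · rintro ⟨h1, h2, h3⟩
    refine (List.subperm_of_subset h1 ?_).perm_of_length_le (by simp [h2])
    intro x hx; simpa using h3 x hx

lemma okW_nodup {m w} (h : okW m w) : w.Nodup := (perm_range_iff.mp h.1).1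
lemma okW_length {m w} (h : okW m w) : w.length = m := (perm_range_iff.mp h.1).2.1
lemma okW_lt {m w} (h : okW m w) : ∀ x ∈ w, x < m := (perm_range_iff.mp h.1).2.2

lemma chain'_imp_mem {S : ℕ → ℕ → Prop} : ∀ {l : List ℕ}, l.IsChain RR →
    (∀ x ∈ l, ∀ y ∈ l, RR x y → S x y) → l.IsChain S := by
  intro l
  induction l with
  | nil => intro _ _; exact isChain_nil
  | cons a l ih =>
    intro h hmem
    rw [isChain_cons] at h ⊢
    refine ⟨fun y hy => hmem a (by simp) y (by right; exact mem_of_mem_head? hy) (h.1 y hy),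
      ih h.2 fun x hx y hy hr => hmem x (by simp [hx]) y (by simp [hy]) hr⟩

/-- splitting a list at (the first occurrence of) a value -/
def splitA (x : ℕ) (w : List ℕ) : List ℕ × List ℕ :=
  (w.takeWhile (· ≠ x), (w.dropWhile (· ≠ x)).tail)

lemma splitA_not_mem {x : ℕ} {w : List ℕ} : x ∉ (splitA x w).1 := by
  intro h
  have := List.mem_takeWhile_imp h
  simp at this

lemma splitA_spec {x : ℕ} {w : List ℕ} (h : x ∈ w) :
    w = (splitA x w).1 ++ x :: (splitA x w).2 := by
  induction w with
  | nil => simp at h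
  | cons a l ih =>
    by_cases hax : a = x
    · subst hax; simp [splitA]
    · have hxl : x ∈ l := by
        rcases mem_cons.mp h with h' | h'
        · exact absurd h'.symm hax
        · exact h'
      have := ih hxl
      simpa [splitA, hax] using this

lemma splitA_eq {x : ℕ} {u v : List ℕ} (h : x ∉ u) : splitA x (u ++ x :: v) = (u, v) := by
  induction u with
  | nil => simp [splitA]
  | cons a u ih =>
    have hax : ¬(a = x) := fun hh => h (by simp [hh])
    have h' : x ∉ u := fun hh => h (by simp [hh])
    have := ih h'
    simp only [splitA, ne_eq] at this ⊢
    simp only [Prod.mk.injEq, decide_not] at this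
    simp [hax, this.1, this.2]

/-! ### value maps for contraction/expansion -/

def decm (a x : ℕ) : ℕ := if x ≤ a then x else x - 1
def incm (a x : ℕ) : ℕ := if x ≤ a then x else x + 1

lemma decm_incm (a x : ℕ) : decm a (incm a x) = x := by
  unfold decm incm; split <;> simp_all <;> omega

lemma incm_decm {a x : ℕ} (hx : x ≠ a + 1) : incm a (decm a x) = x := by
  unfold decm incm; split <;> [skip; split] <;> omega

lemma incm_inj (a : ℕ) : Function.Injective (incm a) := by
  intro x y h; unfold incm at h; split at h <;> split at h <;> omega

lemma incm_a (a : ℕ) : incm a a = a := by simp [incm]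

lemma decm_a (a : ℕ) : decm a a = a := by simp [decm]

lemma incm_RR {a x y : ℕ} (h : RR x y) : RR (incm a x) (incm a y) := by
  unfold RR incm at *; split <;> split <;> omega

lemma incm_ne (a x : ℕ) : incm a x ≠ a + 1 := by unfold incm; split <;> omega

lemma decm_RR {a x y : ℕ} (hxa : x ≠ a) (hx : x ≠ a + 1) (hy : y ≠ a + 1) (h : RR x y) :
    RR (decm a x) (decm a y) := by
  unfold RR decm at *; split <;> split <;> omega

lemma decm_RR_right {a y : ℕ} (hy : y ≠ a + 1) (h : RR (a + 1) y) : RR a (decm a y) := by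
  unfold RR decm at *; split <;> omega

lemma decm_RR_left {a x : ℕ} (hxa : x ≠ a) (hx : x ≠ a + 1) (h : RR x a) :
    RR (decm a x) a := by
  unfold RR decm at *; split <;> omega

lemma decm_eq_a_iff {a x : ℕ} : decm a x = a ↔ (x = a ∨ x = a + 1) := by
  unfold decm; split <;> omega

/-! ### finiteness -/

lemma finite_perm_set (m : ℕ) : {l : List ℕ | l.Perm (List.range m)}.Finite := by
  refine Set.Finite.ofFinset (List.range m).permutations.toFinset fun x => ?_
  simp [List.mem_permutations, Set.mem_setOf_eq]

instance instFinWt (m : ℕ) : Finite (Wt m) := by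
  have := (finite_perm_set m).to_subtype
  exact Finite.of_injective
    (fun w => (⟨w.1, w.2.1⟩ : {l : List ℕ | l.Perm (List.range m)}))
    (fun a b hab => Subtype.ext (by simpa using congrArg Subtype.val hab))

instance instFinAt (m : ℕ) : Finite (At m) := by
  have := (finite_perm_set m).to_subtype
  exact Finite.of_injective
    (fun w => (⟨w.1, w.2.1.1⟩ : {l : List ℕ | l.Perm (List.range m)}))
    (fun a b hab => Subtype.ext (by simpa using congrArg Subtype.val hab))

/-! ### the head-split bijection: G (m+1) = A (m+1) + A m -/

def Bsplit (m : ℕ) : At (m+1) ⊕ At m → Wt (m+1)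
  | .inl w => ⟨w.1, w.2.1⟩
  | .inr v => ⟨0 :: (v.1.map Nat.succ), by
      constructor
      · rw [List.range_succ_eq_map]
        exact (v.2.1.1.map Nat.succ).cons 0
      · rw [List.isChain_cons]
        constructor
        · intro y hy
          rw [List.head?_map] at hy
          rcases Option.map_eq_some_iff.mp hy with ⟨h₀, hh₀, rfl⟩
          have : h₀ ≠ 0 := fun h => v.2.2 (hh₀.trans (by rw [h]))
          simp only [RR]; omega
        · rw [List.isChain_map]
          exact v.2.1.2.imp fun a b h => by simp only [RR] at *; omega⟩

lemma Bsplit_bij (m : ℕ) : Function.Bijective (Bsplit m) := by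
  constructor
  · rintro (a | a) (b | b) hab <;> simp only [Bsplit] at hab
    · have h := congrArg Subtype.val hab
      simp only at h
      exact congrArg Sum.inl (Subtype.ext h)
    · have h := congrArg Subtype.val hab
      simp only at h
      exact absurd (by rw [h]; rfl) a.2.2
    · have h := congrArg Subtype.val hab
      simp only at h
      exact absurd (by rw [← h]; rfl) b.2.2
    · refine congrArg Sum.inr (Subtype.ext ?_)
      have := congrArg Subtype.val hab
      simp only at this
      exact List.map_injective_iff.mpr Nat.succ_injective (by simpa using this)
  · rintro ⟨w, hw⟩
    match hww : w, hw with
    | [], hw => exact absurd (okW_length hw) (by simp)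
    | (h :: t), hw =>
      by_cases h0 : h = 0
      · subst h0
        have hnd := okW_nodup hw
        have h0t : 0 ∉ t := by simp [List.nodup_cons] at hnd; exact hnd.1
        have hget : ∀ x ∈ t, 1 ≤ x := by
          intro x hx; rcases Nat.eq_zero_or_pos x with rfl | h; · exact absurd hx h0t
          · exact h
        have hmap : (t.map (· - 1)).map Nat.succ = t := by
          rw [List.map_map]
          conv_rhs => rw [← List.map_id t]
          refine List.map_congr_left fun x hx => ?_
          have := hget x hx; simp; omega
        have hperm : (t.map (· - 1)).Perm (List.range m) := by
          have h1 : (0 :: t).Perm (0 :: (List.range m).map Nat.succ) := by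
            rw [← List.range_succ_eq_map]; exact hw.1
          have h2 := (h1.cons_inv).map (· - 1)
          rw [List.map_map] at h2
          simpa [Function.comp_def] using h2
        have hchain : (t.map (· - 1)).IsChain RR := by
          rw [List.isChain_map]
          refine chain'_imp_mem hw.2.tail fun x hx y hy hr => ?_
          have := hget x hx; have := hget y hy
          simp only [RR] at *; omega
        have hhead : (t.map (· - 1)).head? ≠ some 0 := by
          match t, hw with
          | [], _ => simp
          | (h₂ :: t₂), hw =>
            have h₂1 : h₂ ≠ 1 := by
              have := hw.2
              rw [List.isChain_cons_cons] at this
              exact this.1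
            have h₂0 : h₂ ≠ 0 := fun hh => h0t (by simp [hh])
            simp only [List.map_cons, List.head?_cons, ne_eq, Option.some.injEq]
            omega
        refine ⟨Sum.inr ⟨t.map (· - 1), ⟨hperm, hchain⟩, hhead⟩, ?_⟩
        simp only [Bsplit]
        exact Subtype.ext (by simp only; rw [hmap])
      · exact ⟨Sum.inl ⟨h :: t, hw, by simpa using h0⟩, rfl⟩

lemma card_split (m : ℕ) :
    Nat.card (Wt (m+1)) = Nat.card (At (m+1)) + Nat.card (At m) := by
  rw [← Nat.card_eq_of_bijective _ (Bsplit_bij m), Nat.card_sum]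

/-! ### base cases -/

lemma card_A0 : Nat.card (At 0) = 1 := by
  have : Unique (At 0) := {
    default := ⟨[], ⟨by simp, List.isChain_nil⟩, by simp⟩
    uniq := fun w => Subtype.ext (by
      have := w.2.1.1
      simp only [List.range_zero, List.perm_nil] at this
      simp [this]) }
  exact Nat.card_unique

lemma card_A1 : Nat.card (At 1) = 0 := by
  have : IsEmpty (At 1) := by
    constructor
    rintro ⟨w, ⟨hp, _⟩, hh⟩
    have : w = [0] := by
      have h1 : List.range 1 = [0] := rfl
      rw [h1, List.perm_singleton] at hp
      exact hp
    subst this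
    exact hh rfl
  simp

/-! ### the insertion/contraction bijection : G (m+2) = (m+1) G (m+1) + m G m -/

lemma range_cons_perm (k : ℕ) : (List.range (k+1)).Perm (k :: List.range k) := by
  rw [List.range_succ]
  exact List.perm_append_singleton k (List.range k)

lemma perm_core {m a : ℕ} (ha : a < m) :
    ((m+1) :: (a+1) :: (List.range m).map (incm a)).Perm (List.range (m+2)) := by
  apply perm_range_iff.mpr
  refine ⟨?_, by simp, ?_⟩
  · rw [List.nodup_cons, List.nodup_cons]
    refine ⟨?_, ?_, (List.nodup_range (n := m)).map (incm_inj a)⟩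
    · simp only [List.mem_cons, List.mem_map, List.mem_range]
      push_neg
      refine ⟨by omega, fun t ht => ?_⟩
      unfold incm; split <;> omega
    · simp only [List.mem_map, List.mem_range]
      rintro ⟨t, ht, hti⟩
      exact incm_ne a t hti
  · intro x hx
    simp only [List.mem_cons, List.mem_map, List.mem_range] at hx
    rcases hx with rfl | rfl | ⟨t, ht, rfl⟩
    · omega
    · omega
    · unfold incm; split <;> omega

lemma B1_mem {m : ℕ} {v : List ℕ} (h : okW (m+1) v) : okW (m+2) ((m+1) :: v) := by
  constructor
  · exact (h.1.cons (m+1)).trans (range_cons_perm (m+1)).symm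
  · rw [List.isChain_cons]
    refine ⟨fun y hy => ?_, h.2⟩
    have : y < m + 1 := okW_lt h y (List.mem_of_mem_head? hy)
    simp only [RR]; omega

lemma B2_mem {m a : ℕ} {x y : List ℕ} (ha : a < m) (h : okW (m+1) (x ++ a :: y)) :
    okW (m+2) (x ++ a :: (m+1) :: y) := by
  have hbd : ∀ t ∈ x ++ a :: y, t < m + 1 := okW_lt h
  obtain ⟨hcx, hcay, hbdxy⟩ := List.isChain_append.mp h.2
  constructor
  · have e1 : x ++ a :: (m+1) :: y = (x ++ [a]) ++ (m+1) :: y := by simp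
    have e2 : (x ++ [a]) ++ y = x ++ a :: y := by simp
    rw [e1]
    refine (List.perm_middle.trans ?_).trans (range_cons_perm (m+1)).symm
    rw [e2]
    exact h.1.cons (m+1)
  · rw [List.isChain_append]
    refine ⟨hcx, ?_, by simpa using hbdxy⟩
    rw [List.isChain_cons_cons]
    refine ⟨by simp only [RR]; omega, ?_⟩
    rw [List.isChain_cons]
    refine ⟨fun t ht => ?_, hcay.tail⟩
    have : t < m + 1 := hbd t (by
      simp only [List.mem_append, List.mem_cons]
      right; right; exact List.mem_of_mem_head? ht)
    simp only [RR]; omega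

lemma B3_mem {m a : ℕ} {x y : List ℕ} (ha : a < m) (h : okW m (x ++ a :: y)) :
    okW (m+2) (x.map (incm a) ++ a :: (m+1) :: (a+1) :: y.map (incm a)) := by
  obtain ⟨hcx, hcay, hbdxy⟩ := List.isChain_append.mp h.2
  constructor
  · have e1 : x.map (incm a) ++ a :: (m+1) :: (a+1) :: y.map (incm a)
        = (x.map (incm a) ++ [a]) ++ (m+1) :: ((a+1) :: y.map (incm a)) := by simp
    have e2 : (x.map (incm a) ++ [a]) ++ (a+1) :: y.map (incm a)
        = (x.map (incm a) ++ [a]) ++ (a+1) :: y.map (incm a) := rfl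
    rw [e1]
    refine List.perm_middle.trans ?_
    refine (((List.perm_middle).cons (m+1)).trans ?_)
    have e3 : (x.map (incm a) ++ [a]) ++ y.map (incm a) = (x ++ a :: y).map (incm a) := by
      simp [incm_a]
    rw [e3]
    exact ((h.1.map (incm a)).cons (a+1)).cons (m+1) |>.trans (perm_core ha)
  · rw [List.isChain_append]
    refine ⟨?_, ?_, ?_⟩
    · rw [List.isChain_map]
      exact hcx.imp fun s t h => incm_RR h
    · rw [List.isChain_cons_cons]
      refine ⟨by simp only [RR]; omega, ?_⟩
      rw [List.isChain_cons_cons]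
      refine ⟨by simp only [RR]; omega, ?_⟩
      rw [List.isChain_cons]
      constructor
      · intro t ht
        rw [List.head?_map] at ht
        rcases Option.map_eq_some_iff.mp ht with ⟨hy, hhy, rfl⟩
        have h1 : RR a hy := by
          rw [List.isChain_cons] at hcay
          exact hcay.1 hy hhy
        simp only [RR, incm] at *
        split <;> omega
      · rw [List.isChain_map]
        exact hcay.tail.imp fun s t h => incm_RR h
    · intro p hp q hq
      rw [List.getLast?_map] at hp
      rcases Option.map_eq_some_iff.mp hp with ⟨lx, hlx, rfl⟩
      have h1 : RR lx a := by
        have := hbdxy lx hlx a (by simp)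
        exact this
      have hq' : q = a := by
        simp only [List.head?_cons, Option.mem_def, Option.some.injEq] at hq
        exact hq.symm
      rw [hq']
      have h2 := incm_RR (a := a) h1
      rwa [incm_a] at h2

lemma mem_of_okW {m a : ℕ} {w : List ℕ} (h : okW m w) (ha : a < m) : a ∈ w :=
  h.1.mem_iff.mpr (by simpa using ha)

def Brec (m : ℕ) : (Option (Fin m) × Wt (m+1)) ⊕ (Fin m × Wt m) → Wt (m+2) := fun p =>
  match p with
  | .inl (none, v) => ⟨(m+1) :: v.1, B1_mem v.2⟩
  | .inl (some a, w) => ⟨(splitA a.1 w.1).1 ++ a.1 :: (m+1) :: (splitA a.1 w.1).2, by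
      have hmem : a.1 ∈ w.1 := mem_of_okW w.2 (by omega)
      have hspec := splitA_spec hmem
      exact B2_mem a.2 (hspec ▸ w.2)⟩
  | .inr (a, z) => ⟨(splitA a.1 z.1).1.map (incm a.1) ++
        a.1 :: (m+1) :: (a.1+1) :: (splitA a.1 z.1).2.map (incm a.1), by
      have hmem : a.1 ∈ z.1 := mem_of_okW z.2 a.2
      have hspec := splitA_spec hmem
      exact B3_mem a.2 (hspec ▸ z.2)⟩

lemma append_cons_injective {c : ℕ} {α₁ β₁ α₂ β₂ : List ℕ}
    (h₁ : c ∉ α₁) (h₂ : c ∉ α₂) (h : α₁ ++ c :: β₁ = α₂ ++ c :: β₂) :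
    α₁ = α₂ ∧ β₁ = β₂ := by
  have e1 := splitA_eq (v := β₁) h₁
  have e2 := splitA_eq (v := β₂) h₂
  rw [h, e2] at e1
  exact ⟨(Prod.ext_iff.mp e1).1.symm, (Prod.ext_iff.mp e1).2.symm⟩

lemma not_mem_concat {m : ℕ} {u : List ℕ} {a : ℕ} (hu : ∀ t ∈ u, t < m+1) (ha : a < m+1) :
    (m+1) ∉ u ++ [a] := by
  intro h
  rcases List.mem_append.mp h with h | h
  · exact absurd (hu _ h) (by omega)
  · simp at h; omega

/-- elements of the left part of a split are below `m+1`, helper -/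
lemma split_elts_lt {m c : ℕ} {w : Wt m} {t : ℕ} (ht : t ∈ (splitA c w.1).1 ∨ t ∈ (splitA c w.1).2)
    (hc : c ∈ w.1) : t < m := by
  have hspec := splitA_spec hc
  refine okW_lt w.2 t ?_
  rw [hspec]
  rcases ht with h | h
  · exact List.mem_append.mpr (Or.inl h)
  · exact List.mem_append.mpr (Or.inr (by simp [h]))

/-- head of the second part of a split at `a` is not `a+1`, by the chain property -/
lemma split_head_ne {m a : ℕ} {w : Wt m} (ha : a ∈ w.1) :
    ∀ t ∈ (splitA a w.1).2.head?, t ≠ a + 1 := by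
  intro t ht
  have hspec := splitA_spec ha
  have hc := w.2.2
  rw [hspec] at hc
  obtain ⟨_, hcay, _⟩ := List.isChain_append.mp hc
  rw [List.isChain_cons] at hcay
  exact hcay.1 t ht

lemma Brec_inj (m : ℕ) : Function.Injective (Brec m) := by
  rintro p₁ p₂ heq
  have heq' := congrArg Subtype.val heq
  match p₁, p₂ with
  | .inl (none, v₁), .inl (none, v₂) =>
    simp only [Brec, List.cons.injEq] at heq'
    obtain rfl : v₁ = v₂ := Subtype.ext heq'.2
    rfl
  | .inl (none, v₁), .inl (some b, w₂) =>
    exfalso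
    simp only [Brec] at heq'
    have hb : ¬ ((m+1) ∉ ([] : List ℕ) → False) := by simp
    have hmem : b.1 ∈ w₂.1 := mem_of_okW w₂.2 (by omega)
    have e2 : (splitA b.1 w₂.1).1 ++ b.1 :: (m+1) :: (splitA b.1 w₂.1).2
        = ((splitA b.1 w₂.1).1 ++ [b.1]) ++ (m+1) :: (splitA b.1 w₂.1).2 := by simp
    rw [e2] at heq'
    have e0 : (m+1) :: v₁.1 = ([] : List ℕ) ++ (m+1) :: v₁.1 := rfl
    rw [e0] at heq'
    have := append_cons_injective (by simp)
      (not_mem_concat (fun t ht => split_elts_lt (Or.inl ht) hmem) (by omega)) heq'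
    exact absurd this.1.symm (by simp)
  | .inl (some b, w₂), .inl (none, v₁) =>
    exfalso
    simp only [Brec] at heq'
    have hmem : b.1 ∈ w₂.1 := mem_of_okW w₂.2 (by omega)
    have e2 : (splitA b.1 w₂.1).1 ++ b.1 :: (m+1) :: (splitA b.1 w₂.1).2
        = ((splitA b.1 w₂.1).1 ++ [b.1]) ++ (m+1) :: (splitA b.1 w₂.1).2 := by simp
    rw [e2] at heq'
    have e0 : (m+1) :: v₁.1 = ([] : List ℕ) ++ (m+1) :: v₁.1 := rfl
    rw [e0] at heq'
    have := append_cons_injective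
      (not_mem_concat (fun t ht => split_elts_lt (Or.inl ht) hmem) (by omega)) (by simp) heq'
    exact absurd this.1 (by simp)
  | .inl (none, v₁), .inr (b, z₂) =>
    exfalso
    simp only [Brec] at heq'
    have hmem : b.1 ∈ z₂.1 := mem_of_okW z₂.2 b.2
    have e2 : (splitA b.1 z₂.1).1.map (incm b.1) ++ b.1 :: (m+1) :: (b.1+1) :: (splitA b.1 z₂.1).2.map (incm b.1)
        = ((splitA b.1 z₂.1).1.map (incm b.1) ++ [b.1]) ++ (m+1) :: ((b.1+1) :: (splitA b.1 z₂.1).2.map (incm b.1)) := by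
      simp
    rw [e2] at heq'
    have e0 : (m+1) :: v₁.1 = ([] : List ℕ) ++ (m+1) :: v₁.1 := rfl
    rw [e0] at heq'
    have hlt : ∀ t ∈ (splitA b.1 z₂.1).1.map (incm b.1), t < m + 1 := by
      intro t ht
      rcases List.mem_map.mp ht with ⟨s, hs, rfl⟩
      have := split_elts_lt (Or.inl hs) hmem
      unfold incm; split <;> omega
    have := append_cons_injective (by simp) (not_mem_concat hlt (by omega)) heq'
    exact absurd this.1.symm (by simp)
  | .inr (b, z₂), .inl (none, v₁) =>
    exfalso
    simp only [Brec] at heq'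
    have hmem : b.1 ∈ z₂.1 := mem_of_okW z₂.2 b.2
    have e2 : (splitA b.1 z₂.1).1.map (incm b.1) ++ b.1 :: (m+1) :: (b.1+1) :: (splitA b.1 z₂.1).2.map (incm b.1)
        = ((splitA b.1 z₂.1).1.map (incm b.1) ++ [b.1]) ++ (m+1) :: ((b.1+1) :: (splitA b.1 z₂.1).2.map (incm b.1)) := by
      simp
    rw [e2] at heq'
    have e0 : (m+1) :: v₁.1 = ([] : List ℕ) ++ (m+1) :: v₁.1 := rfl
    rw [e0] at heq'
    have hlt : ∀ t ∈ (splitA b.1 z₂.1).1.map (incm b.1), t < m + 1 := by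
      intro t ht
      rcases List.mem_map.mp ht with ⟨s, hs, rfl⟩
      have := split_elts_lt (Or.inl hs) hmem
      unfold incm; split <;> omega
    have := append_cons_injective (not_mem_concat hlt (by omega)) (by simp) heq'
    exact absurd this.1 (by simp)
  | .inl (some a, w₁), .inl (some b, w₂) =>
    simp only [Brec] at heq'
    have hmema : a.1 ∈ w₁.1 := mem_of_okW w₁.2 (by omega)
    have hmemb : b.1 ∈ w₂.1 := mem_of_okW w₂.2 (by omega)
    have e1 : (splitA a.1 w₁.1).1 ++ a.1 :: (m+1) :: (splitA a.1 w₁.1).2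
        = ((splitA a.1 w₁.1).1 ++ [a.1]) ++ (m+1) :: (splitA a.1 w₁.1).2 := by simp
    have e2 : (splitA b.1 w₂.1).1 ++ b.1 :: (m+1) :: (splitA b.1 w₂.1).2
        = ((splitA b.1 w₂.1).1 ++ [b.1]) ++ (m+1) :: (splitA b.1 w₂.1).2 := by simp
    rw [e1, e2] at heq'
    have hmain := append_cons_injective
      (not_mem_concat (fun t ht => split_elts_lt (Or.inl ht) hmema) (by omega))
      (not_mem_concat (fun t ht => split_elts_lt (Or.inl ht) hmemb) (by omega)) heq'
    have hab : a.1 = b.1 := by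
      have := congrArg List.getLast? hmain.1
      simpa using this
    obtain rfl : a = b := Fin.ext hab
    have huu : (splitA a.1 w₁.1).1 = (splitA a.1 w₂.1).1 := by
      have := congrArg List.dropLast hmain.1
      simpa using this
    have hw : w₁.1 = w₂.1 := by
      rw [splitA_spec hmema, splitA_spec hmemb, huu, hmain.2]
    obtain rfl : w₁ = w₂ := Subtype.ext hw
    rfl
  | .inl (some a, w₁), .inr (b, z₂) =>
    exfalso
    simp only [Brec] at heq'
    have hmema : a.1 ∈ w₁.1 := mem_of_okW w₁.2 (by omega)
    have hmemb : b.1 ∈ z₂.1 := mem_of_okW z₂.2 b.2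
    have e1 : (splitA a.1 w₁.1).1 ++ a.1 :: (m+1) :: (splitA a.1 w₁.1).2
        = ((splitA a.1 w₁.1).1 ++ [a.1]) ++ (m+1) :: (splitA a.1 w₁.1).2 := by simp
    have e2 : (splitA b.1 z₂.1).1.map (incm b.1) ++ b.1 :: (m+1) :: (b.1+1) :: (splitA b.1 z₂.1).2.map (incm b.1)
        = ((splitA b.1 z₂.1).1.map (incm b.1) ++ [b.1]) ++ (m+1) :: ((b.1+1) :: (splitA b.1 z₂.1).2.map (incm b.1)) := by
      simp
    rw [e1, e2] at heq'
    have hlt : ∀ t ∈ (splitA b.1 z₂.1).1.map (incm b.1), t < m + 1 := by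
      intro t ht
      rcases List.mem_map.mp ht with ⟨s, hs, rfl⟩
      have := split_elts_lt (Or.inl hs) hmemb
      unfold incm; split <;> omega
    have hmain := append_cons_injective
      (not_mem_concat (fun t ht => split_elts_lt (Or.inl ht) hmema) (by omega))
      (not_mem_concat hlt (by omega)) heq'
    have hab : a.1 = b.1 := by
      have := congrArg List.getLast? hmain.1
      simpa using this
    have hhd := split_head_ne hmema ((b.1)+1) (by rw [hmain.2]; simp)
    omega
  | .inr (b, z₂), .inl (some a, w₁) =>
    exfalso
    simp only [Brec] at heq'
    have hmema : a.1 ∈ w₁.1 := mem_of_okW w₁.2 (by omega)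
    have hmemb : b.1 ∈ z₂.1 := mem_of_okW z₂.2 b.2
    have e1 : (splitA a.1 w₁.1).1 ++ a.1 :: (m+1) :: (splitA a.1 w₁.1).2
        = ((splitA a.1 w₁.1).1 ++ [a.1]) ++ (m+1) :: (splitA a.1 w₁.1).2 := by simp
    have e2 : (splitA b.1 z₂.1).1.map (incm b.1) ++ b.1 :: (m+1) :: (b.1+1) :: (splitA b.1 z₂.1).2.map (incm b.1)
        = ((splitA b.1 z₂.1).1.map (incm b.1) ++ [b.1]) ++ (m+1) :: ((b.1+1) :: (splitA b.1 z₂.1).2.map (incm b.1)) := by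
      simp
    rw [e1, e2] at heq'
    have hlt : ∀ t ∈ (splitA b.1 z₂.1).1.map (incm b.1), t < m + 1 := by
      intro t ht
      rcases List.mem_map.mp ht with ⟨s, hs, rfl⟩
      have := split_elts_lt (Or.inl hs) hmemb
      unfold incm; split <;> omega
    have hmain := append_cons_injective
      (not_mem_concat hlt (by omega))
      (not_mem_concat (fun t ht => split_elts_lt (Or.inl ht) hmema) (by omega)) heq'
    have hab : b.1 = a.1 := by
      have := congrArg List.getLast? hmain.1
      simpa using this
    have hhd := split_head_ne hmema ((b.1)+1) (by rw [← hmain.2]; simp)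
    omega
  | .inr (a, z₁), .inr (b, z₂) =>
    simp only [Brec] at heq'
    have hmema : a.1 ∈ z₁.1 := mem_of_okW z₁.2 a.2
    have hmemb : b.1 ∈ z₂.1 := mem_of_okW z₂.2 b.2
    have e1 : (splitA a.1 z₁.1).1.map (incm a.1) ++ a.1 :: (m+1) :: (a.1+1) :: (splitA a.1 z₁.1).2.map (incm a.1)
        = ((splitA a.1 z₁.1).1.map (incm a.1) ++ [a.1]) ++ (m+1) :: ((a.1+1) :: (splitA a.1 z₁.1).2.map (incm a.1)) := by
      simp
    have e2 : (splitA b.1 z₂.1).1.map (incm b.1) ++ b.1 :: (m+1) :: (b.1+1) :: (splitA b.1 z₂.1).2.map (incm b.1)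
        = ((splitA b.1 z₂.1).1.map (incm b.1) ++ [b.1]) ++ (m+1) :: ((b.1+1) :: (splitA b.1 z₂.1).2.map (incm b.1)) := by
      simp
    rw [e1, e2] at heq'
    have hlta : ∀ t ∈ (splitA a.1 z₁.1).1.map (incm a.1), t < m + 1 := by
      intro t ht
      rcases List.mem_map.mp ht with ⟨s, hs, rfl⟩
      have := split_elts_lt (Or.inl hs) hmema
      unfold incm; split <;> omega
    have hltb : ∀ t ∈ (splitA b.1 z₂.1).1.map (incm b.1), t < m + 1 := by
      intro t ht
      rcases List.mem_map.mp ht with ⟨s, hs, rfl⟩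
      have := split_elts_lt (Or.inl hs) hmemb
      unfold incm; split <;> omega
    have hmain := append_cons_injective (not_mem_concat hlta (by omega))
      (not_mem_concat hltb (by omega)) heq'
    have hab : a.1 = b.1 := by
      have := congrArg List.getLast? hmain.1
      simpa using this
    obtain rfl : a = b := Fin.ext hab
    have huu : (splitA a.1 z₁.1).1 = (splitA a.1 z₂.1).1 := by
      have h1 := congrArg List.dropLast hmain.1
      simp only [List.dropLast_concat] at h1
      exact List.map_injective_iff.mpr (incm_inj a.1) h1
    have hvv : (splitA a.1 z₁.1).2 = (splitA a.1 z₂.1).2 := by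
      have h1 := hmain.2
      rw [List.cons.injEq] at h1
      exact List.map_injective_iff.mpr (incm_inj a.1) h1.2
    have hz : z₁.1 = z₂.1 := by
      rw [splitA_spec hmema, splitA_spec hmemb, huu, hvv]
    obtain rfl : z₁ = z₂ := Subtype.ext hz
    rfl

lemma map_decm_incm_id (a : ℕ) (l : List ℕ) : (l.map (incm a)).map (decm a) = l := by
  rw [List.map_map]
  conv_rhs => rw [← List.map_id l]
  exact List.map_congr_left fun x _ => decm_incm a x

lemma map_incm_decm_id {a : ℕ} {l : List ℕ} (h : ∀ x ∈ l, x ≠ a + 1) :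
    (l.map (decm a)).map (incm a) = l := by
  rw [List.map_map]
  conv_rhs => rw [← List.map_id l]
  exact List.map_congr_left fun x hx => incm_decm (h x hx)

lemma Brec_surj (m : ℕ) : Function.Surjective (Brec m) := by
  rintro ⟨w, hw⟩
  have hmem : (m+1) ∈ w := mem_of_okW hw (by omega)
  obtain ⟨u, v, hspec, hnotmem⟩ : ∃ u v, w = u ++ (m+1) :: v ∧ (m+1) ∉ u :=
    ⟨_, _, splitA_spec hmem, splitA_not_mem⟩
  subst hspec
  have hnd : (u ++ (m+1) :: v).Nodup := okW_nodup hw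
  have hlt : ∀ x ∈ u ++ (m+1) :: v, x < m + 2 := okW_lt hw
  obtain ⟨hcu, hcmv, hbd⟩ := List.isChain_append.mp hw.2
  rcases eq_or_ne u [] with rfl | hune
  · -- u = []
    refine ⟨Sum.inl (none, ⟨v, ?_, hcmv.tail⟩), rfl⟩
    have h1 : ((m+1) :: v).Perm ((m+1) :: List.range (m+1)) := by
      have h0 := hw.1
      simp only [List.nil_append] at h0
      exact h0.trans (range_cons_perm (m+1))
    exact h1.cons_inv
  · obtain ⟨u₁, a, rfl⟩ : ∃ u₁ a, u = u₁ ++ [a] :=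
      ⟨u.dropLast, u.getLast hune, (List.dropLast_append_getLast hune).symm⟩
    have hgl : (u₁ ++ [a]).getLast? = some a := by simp
    have haRR : RR a (m+1) := hbd a hgl (m+1) rfl
    have ham1 : a ≠ m + 1 := fun h => hnotmem (by rw [h] at hgl ⊢; simp)
    have ham2 : a < m + 2 := hlt a (by simp)
    have ham : a < m := by
      have : a ≠ m := by simp only [RR] at haRR; omega
      omega
    have hndu : (u₁ ++ [a]).Nodup := (List.nodup_append.mp hnd).1
    have hndmv : ((m+1) :: v).Nodup := (List.nodup_append.mp hnd).2.1
    have hdisj : ∀ t ∈ u₁ ++ [a], t ∉ (m+1) :: v :=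
      fun t ht ht' => (List.nodup_append.mp hnd).2.2 t ht t ht' rfl
    have hanotu₁ : a ∉ u₁ := by
      have := (List.nodup_append.mp hndu).2.2
      intro h
      exact this a h a (by simp) rfl
    have hcu₁ : IsChain RR u₁ := hcu.left_of_append
    have hbdu : ∀ lx ∈ u₁.getLast?, RR lx a := by
      intro lx hlx
      obtain ⟨_, _, h3⟩ := List.isChain_append.mp hcu
      exact h3 lx hlx a rfl
    by_cases hgood : v.head? = some (a+1)
    · -- bad branch : contraction
      obtain ⟨v', rfl⟩ : ∃ v', v = (a+1) :: v' := by
        cases v with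
        | nil => simp at hgood
        | cons hd tl =>
          simp only [List.head?_cons, Option.some.injEq] at hgood
          exact ⟨tl, by rw [hgood]⟩
      have ha1nu₁ : (a+1) ∉ u₁ := by
        intro h
        exact hdisj (a+1) (by simp [h]) (by simp)
      have hanv' : a ∉ v' := by
        have := hdisj a (by simp)
        simp only [List.mem_cons] at this
        push_neg at this
        exact this.2.2
      have ha1nv' : (a+1) ∉ v' := by
        have h1 : ((a+1) :: v').Nodup := hndmv.of_cons
        exact (List.nodup_cons.mp h1).1
      -- the key permutation cancellation
      have hperm1 : ((u₁ ++ [a]) ++ (m+1) :: (a+1) :: v').Perm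
          ((m+1) :: (a+1) :: (u₁ ++ a :: v')) := by
        refine List.perm_middle.trans ?_
        refine Perm.cons (m+1) ?_
        have : (u₁ ++ [a]) ++ (a+1) :: v' = (u₁ ++ [a]) ++ (a+1) :: v' := rfl
        refine List.perm_middle.trans ?_
        refine Perm.cons (a+1) ?_
        simp
      have hkey : (u₁ ++ a :: v').Perm ((List.range m).map (incm a)) := by
        have h1 := (hperm1.symm.trans hw.1).trans (perm_core ham).symm
        exact h1.cons_inv.cons_inv
      have hzperm : ((u₁ ++ a :: v').map (decm a)).Perm (List.range m) := by
        refine (hkey.map (decm a)).trans ?_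
        rw [List.map_map]
        have : (List.range m).map (decm a ∘ incm a) = (List.range m).map id := by
          refine List.map_congr_left fun x _ => ?_
          simp [Function.comp, decm_incm]
        rw [this, List.map_id]
      have hzshape : (u₁ ++ a :: v').map (decm a)
          = u₁.map (decm a) ++ a :: v'.map (decm a) := by
        simp [decm_a]
      have hchev' : IsChain RR ((a+1) :: v') := hcmv.tail
      have hzchain : IsChain RR ((u₁ ++ a :: v').map (decm a)) := by
        rw [hzshape, List.isChain_append]
        refine ⟨?_, ?_, ?_⟩
        · rw [List.isChain_map]
          refine chain'_imp_mem hcu₁ fun x hx y hy hr => ?_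
          exact decm_RR (fun h => hanotu₁ (h ▸ hx)) (fun h => ha1nu₁ (h ▸ hx))
            (fun h => ha1nu₁ (h ▸ hy)) hr
        · rw [List.isChain_cons]
          constructor
          · intro t ht
            rw [List.head?_map] at ht
            rcases Option.map_eq_some_iff.mp ht with ⟨hd', hhd', rfl⟩
            have h1 : RR (a+1) hd' := by
              rw [List.isChain_cons] at hchev'
              exact hchev'.1 hd' hhd'
            exact decm_RR_right (fun h => ha1nv' (h ▸ List.mem_of_mem_head? hhd')) h1
          · rw [List.isChain_map]
            refine chain'_imp_mem hchev'.tail fun x hx y hy hr => ?_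
            exact decm_RR (fun h => hanv' (h ▸ hx)) (fun h => ha1nv' (h ▸ hx))
              (fun h => ha1nv' (h ▸ hy)) hr
        · intro p hp q hq
          rw [List.getLast?_map] at hp
          rcases Option.map_eq_some_iff.mp hp with ⟨lx, hlx, rfl⟩
          have hq' : q = a := by
            simp only [List.head?_cons, Option.mem_def, Option.some.injEq] at hq
            exact hq.symm
          rw [hq']
          have hlxmem : lx ∈ u₁ := by
            have := List.getLast?_eq_getLast (l := u₁) (by rintro rfl; simp at hlx)
            rw [this] at hlx
            rw [Option.some.injEq] at hlx
            rw [← hlx]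
            exact List.getLast_mem _
          exact decm_RR_left (fun h => hanotu₁ (h ▸ hlxmem)) (fun h => ha1nu₁ (h ▸ hlxmem))
            (hbdu lx hlx)
      refine ⟨Sum.inr (⟨a, ham⟩, ⟨(u₁ ++ a :: v').map (decm a), hzperm, hzchain⟩), ?_⟩
      apply Subtype.ext
      simp only [Brec]
      have hsz : splitA a ((u₁ ++ a :: v').map (decm a)) = (u₁.map (decm a), v'.map (decm a)) := by
        rw [hzshape]
        refine splitA_eq ?_
        intro h
        rcases List.mem_map.mp h with ⟨t, htm, hte⟩
        rcases decm_eq_a_iff.mp hte with rfl | rfl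
        · exact hanotu₁ htm
        · exact ha1nu₁ htm
      rw [hsz]
      simp only
      rw [map_incm_decm_id (fun x hx h => ha1nu₁ (h ▸ hx)),
        map_incm_decm_id (fun x hx h => ha1nv' (h ▸ hx))]
      simp
    · -- good branch : plain insertion
      have hwperm : (u₁ ++ a :: v).Perm (List.range (m+1)) := by
        have h1 : ((u₁ ++ [a]) ++ (m+1) :: v).Perm ((m+1) :: (u₁ ++ a :: v)) := by
          refine List.perm_middle.trans ?_
          refine Perm.cons (m+1) ?_
          simp
        have h2 := (h1.symm.trans hw.1).trans (range_cons_perm (m+1))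
        exact h2.cons_inv
      have hwchain : IsChain RR (u₁ ++ a :: v) := by
        rw [List.isChain_append]
        refine ⟨hcu₁, ?_, fun x hx y hy => by
          have hy' : y = a := by
            simp only [List.head?_cons, Option.mem_def, Option.some.injEq] at hy
            exact hy.symm
          rw [hy']
          exact hbdu x hx⟩
        rw [List.isChain_cons]
        refine ⟨fun t ht => ?_, hcmv.tail⟩
        have : t ≠ a + 1 := by
          intro h
          apply hgood
          cases v with
          | nil => simp at ht
          | cons hd tl =>
            simp only [List.head?_cons, Option.mem_def, Option.some.injEq] at ht
            rw [List.head?_cons, ht, h]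
        exact this
      refine ⟨Sum.inl (some ⟨a, ham⟩, ⟨u₁ ++ a :: v, hwperm, hwchain⟩), ?_⟩
      apply Subtype.ext
      simp only [Brec]
      rw [splitA_eq hanotu₁]
      simp

lemma card_rec (m : ℕ) :
    Nat.card (Wt (m+2)) = (m+1) * Nat.card (Wt (m+1)) + m * Nat.card (Wt m) := by
  rw [← Nat.card_eq_of_bijective _ ⟨Brec_inj m, Brec_surj m⟩, Nat.card_sum,
    Nat.card_prod, Nat.card_prod]
  have h1 : Nat.card (Option (Fin m)) = m + 1 := by
    simp [Nat.card_eq_fintype_card]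
  have h2 : Nat.card (Fin m) = m := by simp [Nat.card_eq_fintype_card]
  rw [h1, h2]

lemma card_W_eq (m : ℕ) :
    Nat.card (Wt (m+1)) = numDerangements (m+1) + numDerangements m := by
  induction m using Nat.strong_induction_on with
  | _ m ih =>
    match m with
    | 0 =>
      rw [card_split 0, card_A1, card_A0]
      simp [numDerangements_zero, numDerangements_one]
    | 1 =>
      rw [card_rec 0, card_split 0, card_A1, card_A0]
      have hD2 : numDerangements 2 = 1 := by
        rw [show (2:ℕ) = 0 + 2 from rfl, numDerangements_add_two]
        simp [numDerangements_zero, numDerangements_one]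
      simp [hD2, numDerangements_one]
    | (k+2) =>
      rw [card_rec (k+1), ih (k+1) (by omega), ih k (by omega)]
      rw [show k+1+2 = k+3 from rfl, show k+1+1 = k+2 from rfl]
      have e1 : numDerangements (k+2) = (k+1) * (numDerangements k + numDerangements (k+1)) :=
        numDerangements_add_two k
      have e2 : numDerangements (k+3) = (k+2) * (numDerangements (k+1) + numDerangements (k+2)) :=
        numDerangements_add_two (k+1)
      rw [e2, e1]
      ring
lemma card_A_eq (m : ℕ) : Nat.card (At m) = numDerangements m := by
  induction m with
  | zero => rw [card_A0, numDerangements_zero]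
  | succ k ih =>
    have h1 := card_split k
    rw [card_W_eq k, ih] at h1
    omega

/-! ### frontend : from permutations of `Fin (m+1)` to words -/

def Cmod (m : ℕ) (σ : Equiv.Perm (Fin (m+1))) : Prop :=
  ∀ (k : ℕ) (h : k + 1 < m + 1), σ ⟨k+1, h⟩ ≠ σ ⟨k, Nat.lt_of_succ_lt h⟩ + 1

lemma cond_iff {m : ℕ} (σ : Equiv.Perm (Fin (m+1))) :
    (avoidsSucc (m+1) σ ∧ ¬ containsN1 (m+1) σ) ↔ Cmod m σ := by
  constructor
  · rintro ⟨h1, h2⟩ k hk heq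
    by_cases hlast : σ ⟨k, Nat.lt_of_succ_lt hk⟩ = Fin.last m
    · apply h2
      refine ⟨k, hk, ?_, ?_⟩
      · rw [hlast]; simp
      · have := congrArg Fin.val heq
        rw [Fin.val_add_one, if_pos hlast] at this
        exact this
    · apply h1 k hk
      have := congrArg Fin.val heq
      rw [Fin.val_add_one, if_neg hlast] at this
      exact this
  · intro hC
    constructor
    · intro k hk heq
      apply hC k hk
      apply Fin.ext
      rw [Fin.val_add_one]
      split
      · next hlast =>
          exfalso
          have hv1 : (σ ⟨k, Nat.lt_of_succ_lt hk⟩).val = m := by rw [hlast]; simp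
          have hv2 : (σ ⟨k+1, hk⟩).val < m + 1 := (σ _).isLt
          omega
      · exact heq
    · rintro ⟨k, hk, hm, h0⟩
      apply hC k hk
      apply Fin.ext
      rw [Fin.val_add_one, if_pos (by apply Fin.ext; rw [Fin.val_last]; simpa using hm)]
      exact h0

lemma key_pair {m : ℕ} {u v : Fin (m+1)} (hu : u ≠ 0) (hv : v ≠ 0) :
    (v ≠ u + 1) ↔ ¬ ((v.val - 1) = (u.val - 1) + 1) := by
  have hu1 : 1 ≤ u.val := Nat.one_le_iff_ne_zero.mpr fun h => hu (Fin.ext (by simpa using h))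
  have hv1 : 1 ≤ v.val := Nat.one_le_iff_ne_zero.mpr fun h => hv (Fin.ext (by simpa using h))
  have hum : u.val < m + 1 := u.isLt
  have hvm : v.val < m + 1 := v.isLt
  by_cases hlast : u = Fin.last m
  · have hval : u.val = m := by rw [hlast]; simp
    have h1 : v ≠ u + 1 := by
      intro h
      apply hv
      rw [h, hlast, Fin.last_add_one]
    constructor
    · intro _; omega
    · intro _; exact h1
  · have hadd : (u+1).val = u.val + 1 := by rw [Fin.val_add_one, if_neg hlast]
    constructor
    · intro h hh
      apply h
      apply Fin.ext
      rw [hadd]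
      omega
    · intro h hh
      apply h
      have := congrArg Fin.val hh
      rw [hadd] at this
      omega

def frontW (m : ℕ) (j : Fin (m+1)) (σ : Equiv.Perm (Fin (m+1))) : List ℕ :=
  List.ofFn (fun k : Fin m => (σ ⟨k.1+1, by omega⟩ - j).val - 1)

set_option maxHeartbeats 1000000 in
lemma frontW_mem {m : ℕ} {j : Fin (m+1)} {σ : Equiv.Perm (Fin (m+1))}
    (hC : Cmod m σ) (h0 : σ 0 = j) : okA m (frontW m j σ) := by
  have hne : ∀ p : Fin (m+1), p ≠ 0 → σ p - j ≠ 0 := by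
    intro p hp h
    rw [sub_eq_zero] at h
    exact hp (σ.injective (h.trans h0.symm))
  have hpos : ∀ k : Fin m, 1 ≤ (σ ⟨k.1+1, by omega⟩ - j).val := by
    intro k
    refine Nat.one_le_iff_ne_zero.mpr fun h => hne ⟨k.1+1, by omega⟩ ?_ (Fin.ext (by simpa using h))
    intro hcon
    have := congrArg Fin.val hcon
    simp at this
  have hbnd : ∀ k : Fin m, (σ ⟨k.1+1, by omega⟩ - j).val < m + 1 :=
    fun k => (σ ⟨k.1+1, by omega⟩ - j).isLt
  refine ⟨⟨?_, ?_⟩, ?_⟩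
  · refine perm_range_iff.mpr ⟨?_, by simp [frontW], ?_⟩
    · rw [frontW, List.nodup_ofFn]
      intro k₁ k₂ h
      dsimp only at h
      have h1 := hpos k₁; have h2 := hpos k₂
      have heq : (σ ⟨k₁.1+1, by omega⟩ - j).val = (σ ⟨k₂.1+1, by omega⟩ - j).val := by omega
      have h3 : σ ⟨k₁.1+1, by omega⟩ - j = σ ⟨k₂.1+1, by omega⟩ - j := Fin.ext heq
      rw [sub_left_inj] at h3
      have h4 := σ.injective h3
      exact Fin.ext (by simpa using congrArg Fin.val h4)
    · intro x hx
      rw [frontW, List.mem_ofFn] at hx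
      rcases hx with ⟨k, rfl⟩
      have h1 := hpos k; have h2 := hbnd k
      omega
  · rw [List.isChain_iff_getElem]
    intro i hi
    simp only [frontW, List.length_ofFn] at hi
    simp only [List.get_eq_getElem, frontW, List.getElem_ofFn]
    have hk : (i+1) + 1 < m + 1 := by omega
    have hcm := hC (i+1) hk
    have hu : σ ⟨i+1, Nat.lt_of_succ_lt hk⟩ - j ≠ 0 := hne _ (by
      intro h; have := congrArg Fin.val h; simp at this)
    have hv : σ ⟨i+1+1, hk⟩ - j ≠ 0 := hne _ (by
      intro h; have := congrArg Fin.val h; simp at this)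
    have hv_ne : σ ⟨i+1+1, hk⟩ - j ≠ (σ ⟨i+1, Nat.lt_of_succ_lt hk⟩ - j) + 1 := by
      intro h5
      apply hcm
      rw [sub_add_eq_add_sub, sub_left_inj] at h5
      exact h5
    exact (key_pair hu hv).mp hv_ne
  · cases m with
    | zero => simp [frontW]
    | succ m' =>
      rw [frontW, List.head?_eq_getElem?, List.getElem?_eq_getElem (by simp)]
      simp only [List.getElem_ofFn, ne_eq, Option.some.injEq]
      intro hcon
      have hp1 := hpos ⟨0, by omega⟩
      dsimp only at hp1 hcon
      have hval1 : (σ ⟨0+1, by omega⟩ - j).val = 1 := by omega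
      have heq : σ ⟨0+1, by omega⟩ - j = 1 := Fin.ext (by rw [hval1]; simp)
      have h00 : (⟨0, by omega⟩ : Fin (m'+2)) = 0 := by apply Fin.ext; simp
      refine hC 0 (by omega) ?_
      rw [h00, h0]
      rw [sub_eq_iff_eq_add] at heq
      rw [heq]
      exact add_comm 1 j

open Fin.NatCast

lemma cast_small {m t : ℕ} (h : t < m+1) : ((t : Fin (m+1))).val = t := by
  rw [Fin.val_natCast]; exact Nat.mod_eq_of_lt h

noncomputable def backσ (m : ℕ) (j : Fin (m+1)) (w : At m) : Equiv.Perm (Fin (m+1)) :=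
  Equiv.ofBijective
    (fun p => j + ((if p.1 = 0 then 0 else w.1.getD (p.1 - 1) 0 + 1 : ℕ) : Fin (m+1)))
    (by
      have hlen := okW_length w.2.1
      have hltv := okW_lt w.2.1
      have hnd := okW_nodup w.2.1
      have hval : ∀ p : Fin (m+1),
          (if p.1 = 0 then 0 else w.1.getD (p.1 - 1) 0 + 1 : ℕ) < m + 1 := by
        intro p
        split
        · omega
        · next hp =>
          have hplt : p.1 - 1 < w.1.length := by rw [hlen]; omega
          rw [List.getD_eq_getElem _ _ hplt]
          have := hltv _ (List.getElem_mem hplt)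
          omega
      rw [← Finite.injective_iff_bijective]
      intro p q h
      have h2 := add_right_injective j h
      have h3 := congrArg Fin.val h2
      rw [cast_small (hval p), cast_small (hval q)] at h3
      apply Fin.ext
      by_cases hp : p.1 = 0 <;> by_cases hq : q.1 = 0
      · omega
      · exfalso
        rw [if_pos hp, if_neg hq] at h3
        omega
      · exfalso
        rw [if_neg hp, if_pos hq] at h3
        omega
      · rw [if_neg hp, if_neg hq] at h3
        have hplt : p.1 - 1 < w.1.length := by rw [hlen]; omega
        have hqlt : q.1 - 1 < w.1.length := by rw [hlen]; omega
        rw [List.getD_eq_getElem _ _ hplt, List.getD_eq_getElem _ _ hqlt] at h3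
        have := (hnd.getElem_inj_iff).mp (by omega : w.1[p.1-1] = w.1[q.1-1])
        omega)

lemma backσ_apply (m : ℕ) (j : Fin (m+1)) (w : At m) (p : Fin (m+1)) :
    backσ m j w p = j + ((if p.1 = 0 then 0 else w.1.getD (p.1 - 1) 0 + 1 : ℕ) : Fin (m+1)) :=
  rfl

lemma backσ_zero (m : ℕ) (j : Fin (m+1)) (w : At m) : backσ m j w 0 = j := by
  rw [backσ_apply]
  simp

lemma backσ_apply_pos (m : ℕ) (j : Fin (m+1)) (w : At m) {i : ℕ} (h : i + 1 < m + 1) :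
    backσ m j w ⟨i+1, h⟩ = j + ((w.1.getD i 0 + 1 : ℕ) : Fin (m+1)) := by
  rw [backσ_apply]
  norm_num

lemma backσ_cmod (m : ℕ) (j : Fin (m+1)) (w : At m) : Cmod m (backσ m j w) := by
  have hlen := okW_length w.2.1
  have hltv := okW_lt w.2.1
  intro k hk heq
  match k, hk, heq with
  | 0, hk, heq =>
    have h0lt : (0:ℕ) < w.1.length := by rw [hlen]; omega
    rw [backσ_apply_pos m j w hk] at heq
    have hz : (⟨0, Nat.lt_of_succ_lt hk⟩ : Fin (m+1)) = 0 := Fin.ext (by simp)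
    rw [hz, backσ_zero] at heq
    rw [List.getD_eq_getElem _ _ h0lt] at heq
    have h2 : ((w.1[0] + 1 : ℕ) : Fin (m+1)) = ((1:ℕ) : Fin (m+1)) := by
      apply add_right_injective j
      rw [Nat.cast_one]
      exact heq
    have hb : w.1[0] + 1 < m + 1 := by have := hltv _ (List.getElem_mem h0lt); omega
    have h3 := congrArg Fin.val h2
    rw [cast_small hb, cast_small (by omega : (1:ℕ) < m + 1)] at h3
    apply w.2.2
    rw [List.head?_eq_getElem?, List.getElem?_eq_getElem h0lt]
    simp only [Option.some.injEq]
    omega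
  | (i+1), hk, heq =>
    have hilt : i < w.1.length := by rw [hlen]; omega
    have hilt' : i + 1 < w.1.length := by rw [hlen]; omega
    rw [backσ_apply_pos m j w hk, backσ_apply_pos m j w (Nat.lt_of_succ_lt hk)] at heq
    rw [List.getD_eq_getElem _ _ hilt', List.getD_eq_getElem _ _ hilt] at heq
    rw [add_assoc j, ← Nat.cast_add_one] at heq
    have h2 := add_right_injective j heq
    have h3 := congrArg Fin.val h2
    have hbi : w.1[i] < m := hltv _ (List.getElem_mem hilt)
    have hbi' : w.1[i+1] < m := hltv _ (List.getElem_mem hilt')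
    rw [cast_small (by omega), Fin.val_natCast] at h3
    have hchain := List.isChain_iff_getElem.mp w.2.1.2 i (by rw [hlen]; omega)
    simp only [List.get_eq_getElem, RR] at hchain
    rcases Nat.lt_or_ge (w.1[i] + 1 + 1) (m+1) with hc | hc
    · rw [Nat.mod_eq_of_lt hc] at h3
      exact hchain (by omega)
    · have he : w.1[i] + 1 + 1 = m + 1 := by omega
      rw [he, Nat.mod_self] at h3
      omega

lemma card_front (m : ℕ) (j : Fin (m+1)) :
    Nat.card {σ : Equiv.Perm (Fin (m+1)) // Cmod m σ ∧ σ 0 = j} = Nat.card (At m) := by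
  refine Nat.card_eq_of_bijective
    (fun σc => ⟨frontW m j σc.1, frontW_mem σc.2.1 σc.2.2⟩)
    (Function.bijective_iff_has_inverse.mpr
      ⟨fun w => ⟨backσ m j w, backσ_cmod m j w, backσ_zero m j w⟩, ?_, ?_⟩)
  · -- left inverse : backσ ∘ front = id
    rintro ⟨σ, hC, h0⟩
    apply Subtype.ext
    simp only
    apply Equiv.ext
    intro p
    have hne : ∀ q : Fin (m+1), q ≠ 0 → σ q - j ≠ 0 := by
      intro q hq h
      rw [sub_eq_zero] at h
      exact hq (σ.injective (h.trans h0.symm))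
    by_cases hp0 : p = 0
    · rw [hp0, backσ_zero]
      exact h0.symm
    · have hpv : p.1 ≠ 0 := fun h => hp0 (Fin.ext (by simpa using h))
      obtain ⟨i, hi⟩ : ∃ i, p.1 = i + 1 := ⟨p.1 - 1, by omega⟩
      have hilt : i + 1 < m + 1 := by have := p.isLt; omega
      have hpp : p = ⟨i+1, hilt⟩ := Fin.ext (by simp [hi])
      rw [hpp, backσ_apply_pos m j _ hilt]
      have hlenf : (frontW m j σ).length = m := by simp [frontW]
      have hiltf : i < (frontW m j σ).length := by omega
      have hgd : (⟨frontW m j σ, frontW_mem hC h0⟩ : At m).1.getD i 0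
          = (σ ⟨i+1, hilt⟩ - j).val - 1 := by
        rw [show (⟨frontW m j σ, frontW_mem hC h0⟩ : At m).1 = frontW m j σ from rfl]
        rw [List.getD_eq_getElem _ _ hiltf]
        simp only [frontW, List.getElem_ofFn]
      rw [hgd]
      have hnz : σ ⟨i+1, hilt⟩ - j ≠ 0 := hne _ (by
        intro h; have := congrArg Fin.val h; simp at this)
      have hge : 1 ≤ (σ ⟨i+1, hilt⟩ - j).val :=
        Nat.one_le_iff_ne_zero.mpr fun h => hnz (Fin.ext (by simpa using h))
      rw [show (σ ⟨i+1, hilt⟩ - j).val - 1 + 1 = (σ ⟨i+1, hilt⟩ - j).val by omega]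
      rw [Fin.cast_val_eq_self]
      exact add_sub_cancel j (σ ⟨i+1, hilt⟩)
  · -- right inverse : front ∘ backσ = id
    intro w
    apply Subtype.ext
    simp only
    have hlen := okW_length w.2.1
    have hltv := okW_lt w.2.1
    apply List.ext_getElem
    · simp [frontW, hlen]
    · intro i h₁ h₂
      simp only [frontW, List.getElem_ofFn]
      have hilt : i + 1 < m + 1 := by
        simp only [frontW, List.length_ofFn] at h₁
        omega
      rw [backσ_apply_pos m j w hilt]
      rw [List.getD_eq_getElem _ _ h₂]
      rw [add_sub_cancel_left]
      have hb : w.1[i] + 1 < m + 1 := by have := hltv _ (List.getElem_mem h₂); omega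
      rw [cast_small hb]
      omega

theorem stmt_13 (n : ℕ) (hn : 1 ≤ n) (j : Fin n) :
    Nat.card {σ : Equiv.Perm (Fin n) //
        avoidsSucc n σ ∧ ¬ containsN1 n σ ∧ σ ⟨0, hn⟩ = j} =
      numDerangements (n - 1) := by
  obtain ⟨m, rfl⟩ : ∃ m, n = m + 1 := ⟨n - 1, by omega⟩
  have hiff : ∀ σ : Equiv.Perm (Fin (m+1)),
      (avoidsSucc (m+1) σ ∧ ¬ containsN1 (m+1) σ ∧ σ ⟨0, hn⟩ = j) ↔ (Cmod m σ ∧ σ 0 = j) := by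
    intro σ
    have h0 : (⟨0, hn⟩ : Fin (m+1)) = 0 := Fin.ext (by simp)
    rw [h0]
    constructor
    · rintro ⟨h1, h2, h3⟩
      exact ⟨(cond_iff σ).mp ⟨h1, h2⟩, h3⟩
    · rintro ⟨hc, h3⟩
      exact ⟨((cond_iff σ).mpr hc).1, ((cond_iff σ).mpr hc).2, h3⟩
  rw [Nat.card_congr (Equiv.subtypeEquivRight hiff), card_front, card_A_eq]
  simp
end

section
/- For every integer n ≥ 2 and every j ∈ {2,…,n}, the number of derangements σ of {1,…,n} (permutations with σ(k) ≠ k for all k) whose first digit σ(1) equals j is exactly d_{n−1}; moreover no derangement has first digit 1. In particular the derangements of {1,…,n} are equidistributed over their n−1 nonempty classes. -/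
open Equiv

namespace Stmt14Aux

variable {m : ℕ}

/-- value of succAbove as a natural number -/
lemma succAbove_val (w : Fin (m + 1)) (a : Fin m) :
    (w.succAbove a).val = if a.val < w.val then a.val else a.val + 1 := by
  rcases lt_or_ge (a.val) (w.val) with h | h
  · rw [Fin.succAbove_of_castSucc_lt _ _ (by simpa [Fin.lt_def] using h)]
    simp [h]
  · rw [Fin.succAbove_of_le_castSucc _ _ (by simpa [Fin.le_def] using h)]
    simp [Fin.val_succ, Nat.not_lt.mpr h]

lemma step_iff (w : Fin (m + 1)) (a b : Fin m) (ha : a.val + 1 ≠ w.val) :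
    (w.succAbove b).val = (w.succAbove a).val + 1 ↔ b.val = a.val + 1 := by
  have hb := b.isLt; have ha' := a.isLt
  rw [succAbove_val, succAbove_val]
  split_ifs <;> omega

/-- delete point `p` from positions and `w` from values -/
noncomputable def fwd (p w : Fin (m + 1)) (σ : Perm (Fin (m + 1))) : Perm (Fin m) :=
  Equiv.removeNone (((finSuccEquiv' p).symm.trans σ).trans (finSuccEquiv' w))

lemma fwd_spec (p w : Fin (m + 1)) (σ : Perm (Fin (m + 1))) (h : σ p = w) (j : Fin m) :
    σ (p.succAbove j) = w.succAbove (fwd p w σ j) := by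
  set e := ((finSuccEquiv' p).symm.trans σ).trans (finSuccEquiv' w) with he
  have hne : σ (p.succAbove j) ≠ w := by
    rw [← h]
    exact fun hc => Fin.succAbove_ne p j (σ.injective hc)
  obtain ⟨z, hz⟩ := Fin.exists_succAbove_eq hne
  have hej : e (some j) = some z := by
    simp only [he, Equiv.trans_apply, finSuccEquiv'_symm_some]
    rw [← hz, finSuccEquiv'_succAbove]
  have := Equiv.removeNone_some e ⟨z, hej⟩
  rw [hej] at this
  have : fwd p w σ j = z := by
    have := Option.some_injective _ this
    simpa [fwd, he] using this
  rw [this, hz]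

noncomputable def bwd (p w : Fin (m + 1)) (ρ : Perm (Fin m)) : Perm (Fin (m + 1)) :=
  ((finSuccEquiv' p).trans ρ.optionCongr).trans (finSuccEquiv' w).symm

@[simp] lemma bwd_apply_p (p w : Fin (m + 1)) (ρ : Perm (Fin m)) : bwd p w ρ p = w := by
  simp [bwd, finSuccEquiv'_at, finSuccEquiv'_symm_none]

@[simp] lemma bwd_apply_succAbove (p w : Fin (m + 1)) (ρ : Perm (Fin m)) (j : Fin m) :
    bwd p w ρ (p.succAbove j) = w.succAbove (ρ j) := by
  simp [bwd, finSuccEquiv'_succAbove, finSuccEquiv'_symm_some]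

lemma bwd_fwd (p w : Fin (m + 1)) (σ : Perm (Fin (m + 1))) (h : σ p = w) :
    bwd p w (fwd p w σ) = σ := by
  ext x
  rcases eq_or_ne x p with rfl | hx
  · rw [bwd_apply_p, h]
  · obtain ⟨z, rfl⟩ := Fin.exists_succAbove_eq hx
    rw [bwd_apply_succAbove, ← fwd_spec p w σ h]

lemma fwd_bwd (p w : Fin (m + 1)) (ρ : Perm (Fin m)) :
    fwd p w (bwd p w ρ) = ρ := by
  apply Equiv.ext; intro j
  apply Fin.succAbove_right_injective (p := w)
  rw [← fwd_spec p w (bwd p w ρ) (bwd_apply_p p w ρ) j, bwd_apply_succAbove]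


/-- succession at position `k` (with the bound as a hypothesis) -/
def CondA (m : ℕ) (τ : Perm (Fin m)) (k : ℕ) : Prop :=
  ∀ h : k + 1 < m, (τ ⟨k + 1, h⟩).val = (τ ⟨k, Nat.lt_of_succ_lt h⟩).val + 1

lemma cond_transfer (k0 : ℕ) (hk : k0 < m) (w : Fin (m + 1)) (ρ : Perm (Fin m))
    (hw : w.val = (ρ ⟨k0, hk⟩).val + 1) (k : ℕ) (hkk : k < k0) :
    CondA (m + 1) (bwd ⟨k0 + 1, by omega⟩ w ρ) k ↔ CondA m ρ k := by
  have hk1m : k + 1 < m := by omega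
  have hpos : ∀ (i : ℕ) (hi : i ≤ k0) (h1 : i < m + 1) (h2 : i < m),
      (⟨i, h1⟩ : Fin (m + 1)) = Fin.succAbove ⟨k0 + 1, by omega⟩ ⟨i, h2⟩ := by
    intro i hi h1 h2
    rw [Fin.succAbove_of_castSucc_lt]
    · rfl
    · simp only [Fin.lt_def, Fin.coe_castSucc]; omega
  have ha : (ρ ⟨k, by omega⟩).val + 1 ≠ w.val := by
    rw [hw]
    intro hcon
    have : (ρ ⟨k, by omega⟩) = ρ ⟨k0, hk⟩ := Fin.ext (by omega)
    have := ρ.injective this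
    simp only [Fin.mk.injEq] at this
    omega
  constructor
  · intro H h
    have H' := H (by omega)
    rw [hpos k (by omega) _ (by omega), hpos (k+1) (by omega) _ (by omega),
      bwd_apply_succAbove, bwd_apply_succAbove] at H'
    exact (step_iff w _ _ ha).mp H'
  · intro H h
    rw [hpos k (by omega) _ (by omega), hpos (k+1) (by omega) _ (by omega),
      bwd_apply_succAbove, bwd_apply_succAbove]
    exact (step_iff w _ _ ha).mpr (H (by omega))

lemma fwd_k0 (k0 : ℕ) (hk : k0 < m) (τ : Perm (Fin (m + 1)))
    (hc : CondA (m + 1) τ k0) :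
    (τ ⟨k0 + 1, by omega⟩).val
      = ((fwd ⟨k0 + 1, by omega⟩ (τ ⟨k0 + 1, by omega⟩) τ) ⟨k0, hk⟩).val + 1 := by
  set p : Fin (m + 1) := ⟨k0 + 1, by omega⟩ with hp
  set u := (fwd p (τ p) τ) ⟨k0, hk⟩ with hu
  have h1 : τ (p.succAbove ⟨k0, hk⟩) = (τ p).succAbove u := fwd_spec p (τ p) τ rfl _
  have h2 : p.succAbove ⟨k0, hk⟩ = ⟨k0, by omega⟩ := by
    rw [Fin.succAbove_of_castSucc_lt]
    · rfl
    · simp only [Fin.lt_def, Fin.coe_castSucc, hp]; omega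
  rw [h2] at h1
  have h3 : (τ p).val = (τ (⟨k0, by omega⟩ : Fin (m + 1))).val + 1 := hc (by omega)
  have h4 : ((τ p).succAbove u).val = if u.val < (τ p).val then u.val else u.val + 1 :=
    succAbove_val _ _
  rw [h1] at h3
  show (τ p).val = u.val + 1
  split_ifs at h4 <;> omega

lemma contract (k0 : ℕ) (hk : k0 < m) (T : Finset ℕ) (hT : ∀ k ∈ T, k < k0) :
    Nat.card {τ : Perm (Fin (m + 1)) // CondA (m + 1) τ k0 ∧ ∀ k ∈ T, CondA (m + 1) τ k}
      = Nat.card {ρ : Perm (Fin m) // ∀ k ∈ T, CondA m ρ k} := by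
  apply Nat.card_congr
  refine ⟨fun x => ⟨fwd ⟨k0 + 1, by omega⟩ (x.1 ⟨k0 + 1, by omega⟩) x.1, ?_⟩,
    fun y => ⟨bwd ⟨k0 + 1, by omega⟩ ((y.1 ⟨k0, hk⟩).succ) y.1, ?_, ?_⟩, ?_, ?_⟩
  · -- forward conditions
    obtain ⟨τ, hc, hrest⟩ := x
    intro k hkT
    have hw := fwd_k0 k0 hk τ hc
    have h := hrest k hkT
    rw [← bwd_fwd ⟨k0 + 1, by omega⟩ (τ ⟨k0 + 1, by omega⟩) τ rfl] at h
    exact (cond_transfer k0 hk _ _ hw k (hT k hkT)).mp h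
  · -- backward: CondA at k0
    obtain ⟨ρ, hrest⟩ := y
    intro h
    have e1 : (⟨k0 + 1, h⟩ : Fin (m + 1)) = ⟨k0 + 1, by omega⟩ := rfl
    have e2 : (⟨k0, by omega⟩ : Fin (m + 1))
        = Fin.succAbove ⟨k0 + 1, by omega⟩ ⟨k0, hk⟩ := by
      rw [Fin.succAbove_of_castSucc_lt]
      · rfl
      · simp only [Fin.lt_def, Fin.coe_castSucc]; omega
    rw [e1, bwd_apply_p]
    show _ = (bwd _ _ _ ⟨k0, by omega⟩).val + 1
    rw [e2, bwd_apply_succAbove]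
    have : ((ρ ⟨k0, hk⟩).succ.succAbove (ρ ⟨k0, hk⟩)).val = (ρ ⟨k0, hk⟩).val := by
      rw [succAbove_val]; simp
    rw [this, Fin.val_succ]
  · -- backward: rest conditions
    obtain ⟨ρ, hrest⟩ := y
    intro k hkT
    exact (cond_transfer k0 hk _ _ (by simp [Fin.val_succ]) k (hT k hkT)).mpr (hrest k hkT)
  · -- left inverse
    rintro ⟨τ, hc, hrest⟩
    apply Subtype.ext
    show bwd _ _ _ = τ
    have hw := fwd_k0 k0 hk τ hc
    have : ((fwd ⟨k0 + 1, by omega⟩ (τ ⟨k0 + 1, by omega⟩) τ) ⟨k0, hk⟩).succ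
        = τ ⟨k0 + 1, by omega⟩ := Fin.ext (by rw [Fin.val_succ]; omega)
    rw [this]
    exact bwd_fwd _ _ _ rfl
  · -- right inverse
    rintro ⟨ρ, hrest⟩
    apply Subtype.ext
    show fwd _ (bwd _ _ _ ⟨k0 + 1, by omega⟩) _ = ρ
    rw [bwd_apply_p]
    exact fwd_bwd _ _ _

lemma countA : ∀ (t mm : ℕ) (T : Finset ℕ), T.card = t → (∀ k ∈ T, k + 1 < mm) →
    Nat.card {τ : Perm (Fin mm) // ∀ k ∈ T, CondA mm τ k} = (mm - t).factorial := by
  intro t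
  induction t with
  | zero =>
    intro mm T hcard _
    rw [Finset.card_eq_zero] at hcard
    subst hcard
    have : Nat.card {τ : Perm (Fin mm) // ∀ k ∈ (∅ : Finset ℕ), CondA mm τ k}
        = Nat.card (Perm (Fin mm)) :=
      Nat.card_congr (Equiv.subtypeUnivEquiv (by simp))
    rw [this, Nat.card_eq_fintype_card, Fintype.card_perm, Fintype.card_fin, Nat.sub_zero]
  | succ t ih =>
    intro mm T hcard hT
    have hne : T.Nonempty := Finset.card_pos.mp (by omega)
    set k0 := T.max' hne with hk0
    have hk0T : k0 ∈ T := T.max'_mem hne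
    have hk0m : k0 + 1 < mm := hT k0 hk0T
    obtain ⟨m', rfl⟩ : ∃ m', mm = m' + 1 := ⟨mm - 1, by omega⟩
    have hk : k0 < m' := by omega
    set T' := T.erase k0 with hT'
    have hTins : T = insert k0 T' := by rw [hT', Finset.insert_erase hk0T]
    have hT'lt : ∀ k ∈ T', k < k0 := by
      intro k hkT'
      have h1 := Finset.mem_of_mem_erase hkT'
      have h2 := Finset.ne_of_mem_erase hkT'
      exact lt_of_le_of_ne (T.le_max' k h1) h2
    have step1 : Nat.card {τ : Perm (Fin (m' + 1)) // ∀ k ∈ T, CondA (m' + 1) τ k}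
        = Nat.card {τ : Perm (Fin (m' + 1)) //
            CondA (m' + 1) τ k0 ∧ ∀ k ∈ T', CondA (m' + 1) τ k} := by
      apply Nat.card_congr
      apply Equiv.subtypeEquivRight
      intro τ
      rw [hTins, Finset.forall_mem_insert]
    rw [step1, contract k0 hk T' hT'lt,
      ih m' T' (by rw [hT', Finset.card_erase_of_mem hk0T, hcard]; omega) ?_]
    · congr 1
      omega
    · intro k hkT'
      have := hT'lt k hkT'
      omega


lemma countB (mm : ℕ) (T : Finset ℕ) (hT : ∀ k ∈ T, k + 1 < mm) :
    Nat.card {ρ : Perm (Fin mm) //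
        ∀ k ∈ T, ∀ (h : k + 1 < mm), ρ ⟨k, Nat.lt_of_succ_lt h⟩ = ⟨k + 1, h⟩}
      = (mm - T.card).factorial := by
  classical
  match mm with
  | 0 =>
    have hTe : T = ∅ := by
      rw [Finset.eq_empty_iff_forall_notMem]
      intro k hk; exact absurd (hT k hk) (by omega)
    subst hTe
    have : Nat.card {ρ : Perm (Fin 0) // ∀ k ∈ (∅ : Finset ℕ), ∀ (h : k + 1 < 0),
        ρ ⟨k, Nat.lt_of_succ_lt h⟩ = ⟨k + 1, h⟩} = Nat.card (Perm (Fin 0)) :=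
      Nat.card_congr (Equiv.subtypeUnivEquiv (by simp))
    rw [this, Nat.card_eq_fintype_card, Fintype.card_perm, Fintype.card_fin]
    rfl
  | m'' + 1 =>
    set c := finRotate (m'' + 1) with hc
    have crot : ∀ (k : ℕ) (h : k + 1 < m'' + 1), c ⟨k, Nat.lt_of_succ_lt h⟩ = ⟨k + 1, h⟩ := by
      intro k h
      rw [hc, finRotate_succ_apply]
      apply Fin.ext
      rw [Fin.val_add_one_of_lt (by simp only [Fin.lt_def, Fin.val_last]; omega)]
    have step1 : Nat.card {ρ : Perm (Fin (m'' + 1)) //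
        ∀ k ∈ T, ∀ (h : k + 1 < m'' + 1), ρ ⟨k, Nat.lt_of_succ_lt h⟩ = ⟨k + 1, h⟩}
        = Nat.card {π : Perm (Fin (m'' + 1)) // ∀ a : Fin (m'' + 1), a.val ∈ T → π a = a} := by
      apply Nat.card_congr
      refine Equiv.subtypeEquiv (Equiv.mulLeft c⁻¹) ?_
      intro ρ
      constructor
      · intro H a haT
        have h := hT a.val haT
        have e1 : ρ ⟨a.val, Nat.lt_of_succ_lt h⟩ = ⟨a.val + 1, h⟩ := H a.val haT h
        have e2 : (⟨a.val, Nat.lt_of_succ_lt h⟩ : Fin (m'' + 1)) = a := Fin.eta a _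
        show (c⁻¹ * ρ) a = a
        rw [← e2, Equiv.Perm.mul_apply, e1]
        apply c.injective
        rw [Equiv.Perm.inv_def, Equiv.apply_symm_apply, crot a.val h]
      · intro H k hkT h
        have e3 := H ⟨k, Nat.lt_of_succ_lt h⟩ hkT
        have e4 : (c⁻¹ * ρ) ⟨k, Nat.lt_of_succ_lt h⟩ = ⟨k, Nat.lt_of_succ_lt h⟩ := e3
        have : ρ ⟨k, Nat.lt_of_succ_lt h⟩ = c ⟨k, Nat.lt_of_succ_lt h⟩ := by
          have := congrArg c e4
          rwa [Equiv.Perm.mul_apply, Equiv.Perm.inv_def, Equiv.apply_symm_apply] at this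
        rw [this, crot k h]
    rw [step1]
    have step2 : Nat.card {π : Perm (Fin (m'' + 1)) // ∀ a : Fin (m'' + 1), a.val ∈ T → π a = a}
        = Nat.card (Perm {a : Fin (m'' + 1) // a.val ∉ T}) := by
      apply Nat.card_congr
      refine Equiv.trans (Equiv.subtypeEquivRight ?_)
        (Equiv.Perm.subtypeEquivSubtypePerm (fun a : Fin (m'' + 1) => a.val ∉ T)).symm
      intro π
      constructor
      · intro H a ha; exact H a (not_not.mp ha)
      · intro H a ha; exact H a (not_not.mpr ha)
    rw [step2, Nat.card_eq_fintype_card, Fintype.card_perm]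
    congr 1
    have hsub : Fintype.card {a : Fin (m'' + 1) // a.val ∈ T} = T.card := by
      rw [← Fintype.card_coe T]
      apply Fintype.card_congr
      exact ⟨fun a => ⟨a.1.val, a.2⟩, fun x => ⟨⟨x.1, by have := hT x.1 x.2; omega⟩, x.2⟩,
        fun a => by ext; rfl, fun x => by ext; rfl⟩
    rw [Fintype.card_subtype_compl, hsub, Fintype.card_fin]

noncomputable def ind (p : Prop) : ℤ := @ite ℤ p (Classical.propDecidable p) 1 0

lemma ind_true {p : Prop} (h : p) : ind p = 1 := if_pos h

lemma ind_false {p : Prop} (h : ¬ p) : ind p = 0 := if_neg h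

lemma prod_ind (s : Finset ℕ) (p : ℕ → Prop) :
    ∏ i ∈ s, ind (p i) = ind (∀ i ∈ s, p i) := by
  classical
  induction s using Finset.induction_on with
  | empty => rw [Finset.prod_empty, ind_true (by simp)]
  | insert a s' ha ih =>
    rw [Finset.prod_insert ha, ih]
    by_cases hpa : p a
    · by_cases hps : ∀ i ∈ s', p i
      · rw [ind_true hpa, ind_true hps, ind_true (by rw [Finset.forall_mem_insert]; exact ⟨hpa, hps⟩)]
        ring
      · have hins : ¬ ∀ i ∈ insert a s', p i := by rw [Finset.forall_mem_insert]; tauto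
        rw [ind_false hps, ind_false hins]
        ring
    · have hins : ¬ ∀ i ∈ insert a s', p i := by rw [Finset.forall_mem_insert]; tauto
      rw [ind_false hpa, ind_false hins]
      ring

lemma cardZ {α : Type} [Fintype α] (q : α → Prop) :
    (Nat.card {x : α // q x} : ℤ) = ∑ x : α, ind (q x) := by
  classical
  rw [Nat.card_eq_fintype_card, Fintype.card_subtype, Finset.card_filter]
  push_cast
  apply Finset.sum_congr rfl
  intro x _
  by_cases h : q x
  · rw [if_pos h, ind_true h]
  · rw [if_neg h, ind_false h]

lemma ie {α : Type} [Fintype α] (P : ℕ → α → Prop) (s : Finset ℕ) :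
    (Nat.card {x : α // ∀ i ∈ s, ¬ P i x} : ℤ)
      = ∑ T ∈ s.powerset, (-1 : ℤ) ^ T.card * (Nat.card {x : α // ∀ i ∈ T, P i x} : ℤ) := by
  rw [cardZ]
  have key : ∀ x : α, ind (∀ i ∈ s, ¬ P i x)
      = ∑ T ∈ s.powerset, (-1:ℤ)^T.card * ind (∀ i ∈ T, P i x) := by
    intro x
    rw [← prod_ind s (fun i => ¬ P i x)]
    calc ∏ i ∈ s, ind (¬ P i x)
        = ∏ i ∈ s, ((-(ind (P i x))) + 1) := by
          apply Finset.prod_congr rfl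
          intro i _
          by_cases h : P i x
          · rw [ind_false (not_not.mpr h), ind_true h]; ring
          · rw [ind_true h, ind_false (fun hh => h hh)]; ring
      _ = ∑ T ∈ s.powerset, (∏ i ∈ T, -(ind (P i x))) * ∏ _i ∈ s \ T, (1:ℤ) :=
          Finset.prod_add _ _ s
      _ = ∑ T ∈ s.powerset, (-1:ℤ)^T.card * ind (∀ i ∈ T, P i x) := by
          apply Finset.sum_congr rfl
          intro T _
          rw [Finset.prod_const_one, mul_one]
          have h1 : ∀ i ∈ T, -(ind (P i x)) = (-1) * (ind (P i x)) := by intro i _; ring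
          rw [Finset.prod_congr rfl h1, Finset.prod_mul_distrib, Finset.prod_const,
            prod_ind]
  calc ∑ x : α, ind (∀ i ∈ s, ¬ P i x)
      = ∑ x : α, ∑ T ∈ s.powerset, (-1:ℤ)^T.card * ind (∀ i ∈ T, P i x) :=
        Finset.sum_congr rfl fun x _ => key x
    _ = ∑ T ∈ s.powerset, ∑ x : α, (-1:ℤ)^T.card * ind (∀ i ∈ T, P i x) :=
        Finset.sum_comm
    _ = ∑ T ∈ s.powerset, (-1:ℤ)^T.card * (Nat.card {x : α // ∀ i ∈ T, P i x} : ℤ) := by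
        apply Finset.sum_congr rfl
        intro T _
        rw [← Finset.mul_sum, ← cardZ]

/-- succession pattern present at position `k` -/
def SuccP (mm k : ℕ) (τ : Perm (Fin mm)) : Prop :=
  ∃ h : k + 1 < mm, (τ ⟨k + 1, h⟩).val = (τ ⟨k, Nat.lt_of_succ_lt h⟩).val + 1

/-- `ρ` maps position `k` to value `k+1` -/
def StepP (mm k : ℕ) (ρ : Perm (Fin mm)) : Prop :=
  ∃ h : k + 1 < mm, ρ ⟨k, Nat.lt_of_succ_lt h⟩ = ⟨k + 1, h⟩

lemma key_counts (mm : ℕ) :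
    Nat.card {ρ : Perm (Fin mm) // ∀ k ∈ Finset.range (mm - 1), ¬ StepP mm k ρ}
      = Nat.card {τ : Perm (Fin mm) // ∀ k ∈ Finset.range (mm - 1), ¬ SuccP mm k τ} := by
  have h1 := ie (fun k ρ => StepP mm k ρ) (Finset.range (mm - 1))
  have h2 := ie (fun k τ => SuccP mm k τ) (Finset.range (mm - 1))
  have h3 : ∀ T ∈ (Finset.range (mm - 1)).powerset,
      Nat.card {ρ : Perm (Fin mm) // ∀ k ∈ T, StepP mm k ρ}
        = Nat.card {τ : Perm (Fin mm) // ∀ k ∈ T, SuccP mm k τ} := by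
    intro T hTp
    have hT : ∀ k ∈ T, k + 1 < mm := by
      intro k hk
      have := Finset.mem_powerset.mp hTp hk
      rw [Finset.mem_range] at this
      omega
    have eA : Nat.card {τ : Perm (Fin mm) // ∀ k ∈ T, SuccP mm k τ}
        = Nat.card {τ : Perm (Fin mm) // ∀ k ∈ T, CondA mm τ k} := by
      apply Nat.card_congr
      apply Equiv.subtypeEquivRight
      intro τ
      constructor
      · intro H k hk h
        obtain ⟨h', e⟩ := H k hk
        exact e
      · intro H k hk
        exact ⟨hT k hk, H k hk _⟩
    have eB : Nat.card {ρ : Perm (Fin mm) // ∀ k ∈ T, StepP mm k ρ}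
        = Nat.card {ρ : Perm (Fin mm) //
            ∀ k ∈ T, ∀ (h : k + 1 < mm), ρ ⟨k, Nat.lt_of_succ_lt h⟩ = ⟨k + 1, h⟩} := by
      apply Nat.card_congr
      apply Equiv.subtypeEquivRight
      intro ρ
      constructor
      · intro H k hk h
        obtain ⟨h', e⟩ := H k hk
        exact e
      · intro H k hk
        exact ⟨hT k hk, H k hk _⟩
    rw [eA, eB, countA T.card mm T rfl hT, countB mm T hT]
  have hZ : (Nat.card {ρ : Perm (Fin mm) // ∀ k ∈ Finset.range (mm - 1), ¬ StepP mm k ρ} : ℤ)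
      = (Nat.card {τ : Perm (Fin mm) // ∀ k ∈ Finset.range (mm - 1), ¬ SuccP mm k τ} : ℤ) := by
    rw [h1, h2]
    exact Finset.sum_congr rfl fun T hTp => by rw [h3 T hTp]
  exact_mod_cast hZ


lemma stepC (m : ℕ) :
    Nat.card {ρ : Perm (Fin m) // ∀ k : Fin m, (ρ k).val ≠ k.val + 1}
      = Nat.card {ρ : Perm (Fin m) // ∀ k ∈ Finset.range (m - 1), ¬ StepP m k ρ} := by
  apply Nat.card_congr
  apply Equiv.subtypeEquivRight
  intro ρ
  constructor
  · intro H k _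
    rintro ⟨h, e⟩
    apply H ⟨k, Nat.lt_of_succ_lt h⟩
    rw [e]
  · intro H k hcon
    by_cases hk : k.val + 1 < m
    · apply H k.val (Finset.mem_range.mpr (by omega))
      refine ⟨hk, ?_⟩
      apply Fin.ext
      rw [show (⟨k.val, Nat.lt_of_succ_lt hk⟩ : Fin m) = k from Fin.eta k _]
      exact hcon
    · have := (ρ k).isLt
      omega

lemma stepB (m : ℕ) (hm : 1 ≤ m) :
    Nat.card {σ : Perm (Fin (m + 1)) //
        (∀ k, σ k ≠ k) ∧ σ ⟨0, Nat.succ_pos m⟩ = Fin.last m}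
      = Nat.card {ρ : Perm (Fin m) // ∀ k : Fin m, (ρ k).val ≠ k.val + 1} := by
  have h0sa : ∀ j : Fin m, (⟨0, Nat.succ_pos m⟩ : Fin (m + 1)).succAbove j = j.succ :=
    fun j => Fin.succAbove_of_le_castSucc _ _ (by simp [Fin.le_def])
  have hlsa : ∀ a : Fin m, ((Fin.last m).succAbove a).val = a.val := by
    intro a
    rw [succAbove_val, Fin.val_last, if_pos a.isLt]
  apply Nat.card_congr
  refine ⟨fun x => ⟨fwd ⟨0, Nat.succ_pos m⟩ (Fin.last m) x.1, ?_⟩,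
    fun y => ⟨bwd ⟨0, Nat.succ_pos m⟩ (Fin.last m) y.1, ?_, ?_⟩, ?_, ?_⟩
  · obtain ⟨σ, hder, h0⟩ := x
    intro k hcon
    have h2 := fwd_spec ⟨0, Nat.succ_pos m⟩ (Fin.last m) σ h0 k
    rw [h0sa k] at h2
    apply hder k.succ
    apply Fin.ext
    rw [h2, hlsa, Fin.val_succ, hcon]
  · obtain ⟨ρ, hcond⟩ := y
    intro x
    induction x using Fin.cases with
    | zero =>
      have h1 : bwd ⟨0, Nat.succ_pos m⟩ (Fin.last m) ρ 0 = Fin.last m :=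
        bwd_apply_p _ _ _
      rw [h1]
      intro hcon
      have := congrArg Fin.val hcon
      rw [Fin.val_last] at this
      simp at this
      omega
    | succ j =>
      have h1 : bwd ⟨0, Nat.succ_pos m⟩ (Fin.last m) ρ j.succ
          = (Fin.last m).succAbove (ρ j) := by
        rw [← h0sa j, bwd_apply_succAbove]
      rw [h1]
      intro hcon
      apply hcond j
      have := congrArg Fin.val hcon
      rw [hlsa, Fin.val_succ] at this
      exact this
  · exact bwd_apply_p _ _ _
  · rintro ⟨σ, hder, h0⟩
    apply Subtype.ext
    exact bwd_fwd _ _ _ h0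
  · rintro ⟨ρ, hcond⟩
    apply Subtype.ext
    exact fwd_bwd _ _ _

lemma stepA (m : ℕ) (hm : 1 ≤ m) (j : Fin (m + 1)) (hj : 1 ≤ j.val) :
    Nat.card {σ : Perm (Fin (m + 1)) // (∀ k, σ k ≠ k) ∧ σ ⟨0, Nat.succ_pos m⟩ = j}
      = Nat.card {σ : Perm (Fin (m + 1)) //
          (∀ k, σ k ≠ k) ∧ σ ⟨0, Nat.succ_pos m⟩ = Fin.last m} := by
  set sw := Equiv.swap j (Fin.last m) with hsw
  have hss : sw * sw = 1 := Equiv.swap_mul_self _ _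
  have hsw0 : sw ⟨0, Nat.succ_pos m⟩ = ⟨0, Nat.succ_pos m⟩ := by
    apply Equiv.swap_apply_of_ne_of_ne
    · intro hcon
      have := congrArg Fin.val hcon
      simp at this
      omega
    · intro hcon
      have := congrArg Fin.val hcon
      rw [Fin.val_last] at this
      simp at this
      omega
  have hder : ∀ (σ : Perm (Fin (m + 1))), (∀ k, σ k ≠ k) → ∀ k, (sw * σ * sw) k ≠ k := by
    intro σ hd k hk
    apply hd (sw k)
    have h2 : sw (σ (sw k)) = sw (sw k) := by
      rw [Equiv.swap_apply_self]
      exact hk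
    exact sw.injective h2
  have hconj : ∀ (σ : Perm (Fin (m + 1))),
      (sw * σ * sw) ⟨0, Nat.succ_pos m⟩ = sw (σ ⟨0, Nat.succ_pos m⟩) := by
    intro σ
    rw [Equiv.Perm.mul_apply, Equiv.Perm.mul_apply, hsw0]
  have hinv : ∀ (σ : Perm (Fin (m + 1))), sw * (sw * σ * sw) * sw = σ := by
    intro σ
    have : sw * (sw * σ * sw) * sw = (sw * sw) * σ * (sw * sw) := by
      simp only [mul_assoc]
    rw [this, hss, one_mul, mul_one]
  apply Nat.card_congr
  refine ⟨fun x => ⟨sw * x.1 * sw, hder x.1 x.2.1, ?_⟩,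
    fun y => ⟨sw * y.1 * sw, hder y.1 y.2.1, ?_⟩, ?_, ?_⟩
  · rw [hconj, x.2.2, hsw, Equiv.swap_apply_left]
  · rw [hconj, y.2.2, hsw, Equiv.swap_apply_right]
  · rintro ⟨σ, h1, h2⟩
    apply Subtype.ext
    exact hinv σ
  · rintro ⟨σ, h1, h2⟩
    apply Subtype.ext
    exact hinv σ

lemma dCount_eq (mm : ℕ) :
    dCount mm = Nat.card {τ : Perm (Fin mm) // ∀ k ∈ Finset.range (mm - 1), ¬ SuccP mm k τ} := by
  unfold dCount
  apply Nat.card_congr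
  apply Equiv.subtypeEquivRight
  intro τ
  constructor
  · intro H k _
    rintro ⟨h, e⟩
    exact H k h e
  · intro H k h e
    exact H k (Finset.mem_range.mpr (by omega)) ⟨h, e⟩

end Stmt14Aux

theorem stmt_14 (n : ℕ) (hn : 2 ≤ n) :
    (∀ j : Fin n, 1 ≤ j.val →
      Nat.card {σ : Equiv.Perm (Fin n) //
          (∀ k, σ k ≠ k) ∧ σ ⟨0, by omega⟩ = j} = dCount (n - 1)) ∧
    (∀ σ : Equiv.Perm (Fin n), (∀ k, σ k ≠ k) →
      σ ⟨0, by omega⟩ ≠ ⟨0, by omega⟩) := by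
  constructor
  · intro j hj
    obtain ⟨m, rfl⟩ : ∃ m, n = m + 1 := ⟨n - 1, by omega⟩
    have hm : 1 ≤ m := by omega
    have e1 : Nat.card {σ : Equiv.Perm (Fin (m + 1)) //
        (∀ k, σ k ≠ k) ∧ σ ⟨0, by omega⟩ = j}
        = Nat.card {σ : Equiv.Perm (Fin (m + 1)) //
        (∀ k, σ k ≠ k) ∧ σ ⟨0, Nat.succ_pos m⟩ = j} := rfl
    rw [show m + 1 - 1 = m from rfl, e1, Stmt14Aux.stepA m hm j hj, Stmt14Aux.stepB m hm,
      Stmt14Aux.stepC m, Stmt14Aux.key_counts m, ← Stmt14Aux.dCount_eq m]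
  · intro σ h
    exact h _
end

section
/- For every integer n ≥ 2 and every j ∈ {2,…,n}, the number of arrangements of {1,…,n} that avoid all patterns 12, 23, …, (n−1)n, contain the pattern n1, and have first digit σ(1) = j is exactly Der_{n−2}. -/
open Equiv

namespace Stmt16

variable {M : ℕ}

lemma succAbove_val (p : Fin (M + 1)) (k : Fin M) :
    (p.succAbove k).val = if k.val < p.val then k.val else k.val + 1 := by
  rw [Fin.succAbove]
  split
  · next h => simp only [Fin.coe_castSucc]; rw [if_pos]; exact h
  · next h =>
    simp only [Fin.val_succ]
    rw [if_neg]
    simpa [Fin.lt_def] using h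

def del (σ : Perm (Fin (M + 1))) (p q : Fin (M + 1)) : Perm (Fin M) :=
  (((finSuccEquiv' p).symm.trans σ).trans (finSuccEquiv' q)).removeNone

def ins (τ : Perm (Fin M)) (p q : Fin (M + 1)) : Perm (Fin (M + 1)) :=
  ((finSuccEquiv' p).trans τ.optionCongr).trans (finSuccEquiv' q).symm

@[simp] lemma ins_apply_p (τ : Perm (Fin M)) (p q : Fin (M + 1)) : ins τ p q p = q := by
  simp [ins]

@[simp] lemma ins_apply_succAbove (τ : Perm (Fin M)) (p q : Fin (M + 1)) (k : Fin M) :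
    ins τ p q (p.succAbove k) = q.succAbove (τ k) := by
  simp [ins]

lemma del_spec (σ : Perm (Fin (M + 1))) (p q : Fin (M + 1)) (h : σ p = q) (k : Fin M) :
    q.succAbove (del σ p q k) = σ (p.succAbove k) := by
  have hne : σ (p.succAbove k) ≠ q := by
    intro hc
    exact p.succAbove_ne k (σ.injective (by rw [hc, h]))
  set E := (((finSuccEquiv' p).symm.trans σ).trans (finSuccEquiv' q)) with hE
  have h1 : E (some k) = finSuccEquiv' q (σ (p.succAbove k)) := by
    simp [hE, Equiv.trans_apply]
  obtain ⟨x, hx⟩ : ∃ x, finSuccEquiv' q (σ (p.succAbove k)) = some x := by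
    rcases Option.eq_none_or_eq_some (finSuccEquiv' q (σ (p.succAbove k))) with h0 | hs
    · exfalso; apply hne
      have := congrArg (finSuccEquiv' q).symm h0
      simpa using this
    · exact hs
  have h2 : some (E.removeNone k) = E (some k) :=
    Equiv.removeNone_some E ⟨x, by rw [h1, hx]⟩
  have h3 : some ((del σ p q) k) = finSuccEquiv' q (σ (p.succAbove k)) := by
    rw [del, h2, h1]
  have := congrArg (finSuccEquiv' q).symm h3
  simpa using this

lemma ins_del (σ : Perm (Fin (M + 1))) (p q : Fin (M + 1)) (h : σ p = q) :
    ins (del σ p q) p q = σ := by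
  apply Equiv.ext
  intro x
  rcases eq_or_ne x p with rfl | hx
  · simp [h]
  · obtain ⟨k, rfl⟩ := Fin.exists_succAbove_eq hx
    rw [ins_apply_succAbove, del_spec σ p q h]

lemma del_ins (τ : Perm (Fin M)) (p q : Fin (M + 1)) :
    del (ins τ p q) p q = τ := by
  apply Equiv.ext
  intro k
  have h : (ins τ p q) p = q := ins_apply_p τ p q
  have := del_spec (ins τ p q) p q h k
  rw [ins_apply_succAbove] at this
  exact q.succAbove_right_injective this

lemma fin_add_one_val {m : ℕ} (a : Fin (m + 1)) : (a + 1).val = (a.val + 1) % (m + 1) := by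
  simp [Fin.add_def]

@[simp] lemma val_mk' {m a : ℕ} (h : a < m) : ((⟨a, h⟩ : Fin m)).val = a := rfl

/-- cyclic-succession avoidance (on `m + 1` letters) -/
def CycAvoid (m : ℕ) (τ : Perm (Fin (m + 1))) : Prop :=
  ∀ (k : ℕ) (h : k + 1 < m + 1), τ ⟨k + 1, h⟩ ≠ τ ⟨k, Nat.lt_of_succ_lt h⟩ + 1


section Bij1

/-- forward: delete letter `0` (digit 1) from the word. -/
def fwd1 (σ : Perm (Fin (M + 2))) : Perm (Fin (M + 1)) :=
  del σ (σ.symm ⟨0, Nat.succ_pos (M + 1)⟩) ⟨0, Nat.succ_pos (M + 1)⟩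

lemma fwd1_spec (σ : Perm (Fin (M + 2))) (k : Fin (M + 1)) :
    (σ ((σ.symm ⟨0, Nat.succ_pos (M + 1)⟩).succAbove k)).val = (fwd1 σ k).val + 1 := by
  have h := del_spec σ (σ.symm ⟨0, Nat.succ_pos (M + 1)⟩) ⟨0, Nat.succ_pos (M + 1)⟩
    (σ.apply_symm_apply _) k
  have h2 := congrArg Fin.val h
  rw [succAbove_val] at h2
  rw [if_neg (Nat.not_lt_zero _)] at h2
  exact h2.symm

lemma fwd1_specA (σ : Perm (Fin (M + 2))) (k : ℕ) (hk : k < M + 1)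
    (h : k < (σ.symm ⟨0, Nat.succ_pos (M + 1)⟩).val) :
    (σ ⟨k, by omega⟩).val = (fwd1 σ ⟨k, hk⟩).val + 1 := by
  have hsa : (σ.symm ⟨0, Nat.succ_pos (M + 1)⟩).succAbove ⟨k, hk⟩ = ⟨k, by omega⟩ := by
    apply Fin.ext
    rw [succAbove_val]
    exact if_pos h
  have := fwd1_spec σ ⟨k, hk⟩
  rwa [hsa] at this

lemma fwd1_specB (σ : Perm (Fin (M + 2))) (k : ℕ) (hk : k < M + 1)
    (h : (σ.symm ⟨0, Nat.succ_pos (M + 1)⟩).val ≤ k) :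
    (σ ⟨k + 1, by omega⟩).val = (fwd1 σ ⟨k, hk⟩).val + 1 := by
  have hsa : (σ.symm ⟨0, Nat.succ_pos (M + 1)⟩).succAbove ⟨k, hk⟩ = ⟨k + 1, by omega⟩ := by
    apply Fin.ext
    rw [succAbove_val]
    exact if_neg (Nat.not_lt.mpr h)
  have := fwd1_spec σ ⟨k, hk⟩
  rwa [hsa] at this

lemma pos_facts (σ : Perm (Fin (M + 2))) (hN : containsN1 (M + 2) σ) :
    ∃ (k0 : ℕ) (hk0 : k0 + 1 < M + 2),
      σ.symm ⟨0, Nat.succ_pos (M + 1)⟩ = ⟨k0 + 1, hk0⟩ ∧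
      (σ ⟨k0, Nat.lt_of_succ_lt hk0⟩).val = M + 1 := by
  obtain ⟨k0, hk0, ht, hz⟩ := hN
  refine ⟨k0, hk0, ?_, ht⟩
  rw [Equiv.symm_apply_eq]
  exact (Fin.ext (by simp [hz])).symm

lemma fwd1_cyc (σ : Perm (Fin (M + 2))) (hA : avoidsSucc (M + 2) σ)
    (hN : containsN1 (M + 2) σ) : CycAvoid M (fwd1 σ) := by
  obtain ⟨k0, hk0, hp, htop⟩ := pos_facts σ hN
  have hpv : (σ.symm ⟨0, Nat.succ_pos (M + 1)⟩).val = k0 + 1 := by rw [hp]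
  intro k hk1 heq
  have hbv : (fwd1 σ ⟨k + 1, hk1⟩).val
      = ((fwd1 σ ⟨k, Nat.lt_of_succ_lt hk1⟩).val + 1) % (M + 1) := by
    rw [heq, fin_add_one_val]
  have haM : (fwd1 σ ⟨k, Nat.lt_of_succ_lt hk1⟩).val < M + 1 := Fin.is_lt _
  have hbM : (fwd1 σ ⟨k + 1, hk1⟩).val < M + 1 := Fin.is_lt _
  rcases Nat.lt_trichotomy (k + 1) (k0 + 1) with hc | hc | hc
  · -- both positions before the deleted one
    have w1 : k < M + 2 := by omega
    have w2 : k + 1 < M + 2 := by omega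
    have s1 : (σ ⟨k, w1⟩).val = (fwd1 σ ⟨k, Nat.lt_of_succ_lt hk1⟩).val + 1 :=
      fwd1_specA σ k (Nat.lt_of_succ_lt hk1) (by omega)
    have s2 : (σ ⟨k + 1, w2⟩).val = (fwd1 σ ⟨k + 1, hk1⟩).val + 1 :=
      fwd1_specA σ (k + 1) hk1 (by omega)
    have s3 : (σ ⟨k + 1, w2⟩).val ≠ (σ ⟨k, w1⟩).val + 1 := hA k w2
    have hA1 : (fwd1 σ ⟨k, Nat.lt_of_succ_lt hk1⟩).val = M := by
      by_contra hne
      rw [Nat.mod_eq_of_lt (by omega)] at hbv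
      omega
    have hkk : (⟨k, w1⟩ : Fin (M + 2)) = ⟨k0, Nat.lt_of_succ_lt hk0⟩ :=
      σ.injective (Fin.ext (by omega))
    have : k = k0 := congrArg Fin.val hkk
    omega
  · -- k = k : position k is just before the letter 0
    obtain rfl : k = k0 := by omega
    have w1 : k < M + 2 := by omega
    have w3 : k + 2 < M + 2 := by omega
    have s1 : (σ ⟨k, w1⟩).val = (fwd1 σ ⟨k, Nat.lt_of_succ_lt hk1⟩).val + 1 :=
      fwd1_specA σ k (Nat.lt_of_succ_lt hk1) (by omega)
    have hA1 : (fwd1 σ ⟨k, Nat.lt_of_succ_lt hk1⟩).val = M := by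
      have : (σ ⟨k, w1⟩).val = (σ ⟨k, Nat.lt_of_succ_lt hk0⟩).val := rfl
      omega
    have hB0 : (fwd1 σ ⟨k + 1, hk1⟩).val = 0 := by
      rw [hbv, hA1, Nat.mod_self]
    have s2 : (σ ⟨k + 1 + 1, w3⟩).val = (fwd1 σ ⟨k + 1, hk1⟩).val + 1 :=
      fwd1_specB σ (k + 1) hk1 (by omega)
    have s4 : (σ ⟨k + 1 + 1, w3⟩).val ≠ (σ ⟨k + 1, Nat.lt_of_succ_lt w3⟩).val + 1 :=
      hA (k + 1) w3
    have s5 : σ ⟨k + 1, Nat.lt_of_succ_lt w3⟩ = ⟨0, Nat.succ_pos (M + 1)⟩ := by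
      have := σ.apply_symm_apply ⟨0, Nat.succ_pos (M + 1)⟩
      rw [hp] at this
      exact this
    have s6 : (σ ⟨k + 1, Nat.lt_of_succ_lt w3⟩).val = 0 := by rw [s5]
    omega
  · -- both positions after the deleted one
    have w2 : k + 1 + 1 < M + 2 := by omega
    have s1 : (σ ⟨k + 1, Nat.lt_of_succ_lt w2⟩).val
        = (fwd1 σ ⟨k, Nat.lt_of_succ_lt hk1⟩).val + 1 :=
      fwd1_specB σ k (Nat.lt_of_succ_lt hk1) (by omega)
    have s2 : (σ ⟨k + 1 + 1, w2⟩).val = (fwd1 σ ⟨k + 1, hk1⟩).val + 1 :=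
      fwd1_specB σ (k + 1) hk1 (by omega)
    have s3 : (σ ⟨k + 1 + 1, w2⟩).val ≠ (σ ⟨k + 1, Nat.lt_of_succ_lt w2⟩).val + 1 :=
      hA (k + 1) w2
    have hA1 : (fwd1 σ ⟨k, Nat.lt_of_succ_lt hk1⟩).val = M := by
      by_contra hne
      rw [Nat.mod_eq_of_lt (by omega)] at hbv
      omega
    have hkk : (⟨k + 1, Nat.lt_of_succ_lt w2⟩ : Fin (M + 2)) = ⟨k0, Nat.lt_of_succ_lt hk0⟩ :=
      σ.injective (Fin.ext (by omega))
    have : k + 1 = k0 := congrArg Fin.val hkk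
    omega

lemma fwd1_zero (σ : Perm (Fin (M + 2))) (hN : containsN1 (M + 2) σ)
    (j : Fin (M + 2)) (j' : Fin (M + 1)) (hj : j.val = j'.val + 1)
    (h0 : σ ⟨0, Nat.succ_pos (M + 1)⟩ = j) :
    fwd1 σ ⟨0, Nat.succ_pos M⟩ = j' := by
  obtain ⟨k0, hk0, hp, htop⟩ := pos_facts σ hN
  have hpv : (σ.symm ⟨0, Nat.succ_pos (M + 1)⟩).val = k0 + 1 := by rw [hp]
  have s1 : (σ ⟨0, Nat.succ_pos (M + 1)⟩).val = (fwd1 σ ⟨0, Nat.succ_pos M⟩).val + 1 :=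
    fwd1_specA σ 0 (Nat.succ_pos M) (by omega)
  rw [h0] at s1
  exact Fin.ext (by omega)

end Bij1


section Bij1b

/-- backward: insert letter `0` right after the letter `M+1`. -/
def bwd1 (τ : Perm (Fin (M + 1))) : Perm (Fin (M + 2)) :=
  ins τ ⟨(τ.symm ⟨M, Nat.lt_succ_self M⟩).val + 1, Nat.succ_lt_succ (Fin.is_lt _)⟩
    ⟨0, Nat.succ_pos (M + 1)⟩

lemma bwd1_p (τ : Perm (Fin (M + 1))) :
    bwd1 τ ⟨(τ.symm ⟨M, Nat.lt_succ_self M⟩).val + 1, Nat.succ_lt_succ (Fin.is_lt _)⟩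
      = ⟨0, Nat.succ_pos (M + 1)⟩ :=
  ins_apply_p _ _ _

lemma bwd1_spec (τ : Perm (Fin (M + 1))) (k : Fin (M + 1)) :
    (bwd1 τ ((⟨(τ.symm ⟨M, Nat.lt_succ_self M⟩).val + 1,
        Nat.succ_lt_succ (Fin.is_lt _)⟩ : Fin (M + 2)).succAbove k)).val = (τ k).val + 1 := by
  have h := ins_apply_succAbove τ
    ⟨(τ.symm ⟨M, Nat.lt_succ_self M⟩).val + 1, Nat.succ_lt_succ (Fin.is_lt _)⟩
    ⟨0, Nat.succ_pos (M + 1)⟩ k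
  have h2 := congrArg Fin.val h
  rw [succAbove_val, if_neg (Nat.not_lt_zero _)] at h2
  exact h2

lemma bwd1_specA (τ : Perm (Fin (M + 1))) (k : ℕ) (hk : k < M + 1)
    (h : k ≤ (τ.symm ⟨M, Nat.lt_succ_self M⟩).val) :
    (bwd1 τ ⟨k, by omega⟩).val = (τ ⟨k, hk⟩).val + 1 := by
  have hsa : ((⟨(τ.symm ⟨M, Nat.lt_succ_self M⟩).val + 1,
      Nat.succ_lt_succ (Fin.is_lt _)⟩ : Fin (M + 2)).succAbove ⟨k, hk⟩)
      = ⟨k, by omega⟩ := by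
    apply Fin.ext
    rw [succAbove_val]
    exact if_pos (by simp only [val_mk']; omega)
  have := bwd1_spec τ ⟨k, hk⟩
  rwa [hsa] at this

lemma bwd1_specB (τ : Perm (Fin (M + 1))) (k : ℕ) (hk : k < M + 1)
    (h : (τ.symm ⟨M, Nat.lt_succ_self M⟩).val + 1 ≤ k) :
    (bwd1 τ ⟨k + 1, by omega⟩).val = (τ ⟨k, hk⟩).val + 1 := by
  have hsa : ((⟨(τ.symm ⟨M, Nat.lt_succ_self M⟩).val + 1,
      Nat.succ_lt_succ (Fin.is_lt _)⟩ : Fin (M + 2)).succAbove ⟨k, hk⟩)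
      = ⟨k + 1, by omega⟩ := by
    apply Fin.ext
    rw [succAbove_val]
    exact if_neg (by simp only [val_mk']; omega)
  have := bwd1_spec τ ⟨k, hk⟩
  rwa [hsa] at this

lemma bwd1_mem (τ : Perm (Fin (M + 1))) (hC : CycAvoid M τ)
    (j : Fin (M + 2)) (j' : Fin (M + 1)) (hj : j.val = j'.val + 1)
    (h0' : τ ⟨0, Nat.succ_pos M⟩ = j') :
    avoidsSucc (M + 2) (bwd1 τ) ∧ containsN1 (M + 2) (bwd1 τ) ∧
      bwd1 τ ⟨0, Nat.succ_pos (M + 1)⟩ = j := by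
  have hrv : (τ.symm ⟨M, Nat.lt_succ_self M⟩).val < M + 1 := Fin.is_lt _
  have hr : τ ⟨(τ.symm ⟨M, Nat.lt_succ_self M⟩).val, hrv⟩ = ⟨M, Nat.lt_succ_self M⟩ :=
    τ.apply_symm_apply _
  have hpv : (bwd1 τ ⟨(τ.symm ⟨M, Nat.lt_succ_self M⟩).val + 1,
      Nat.succ_lt_succ (Fin.is_lt _)⟩).val = 0 := by rw [bwd1_p]
  refine ⟨?_, ?_, ?_⟩
  · -- avoidsSucc
    intro t ht hE
    have hu1 : t < M + 2 := Nat.lt_of_succ_lt ht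
    rcases Nat.lt_trichotomy (t + 1) ((τ.symm ⟨M, Nat.lt_succ_self M⟩).val + 1) with hc | hc | hc
    · -- both before insertion point
      have u1 : t < M + 1 := by omega
      have u2 : t + 1 < M + 1 := by omega
      have s1 : (bwd1 τ ⟨t, Nat.lt_of_succ_lt ht⟩).val = (τ ⟨t, u1⟩).val + 1 :=
        bwd1_specA τ t u1 (by omega)
      have s2 : (bwd1 τ ⟨t + 1, ht⟩).val = (τ ⟨t + 1, u2⟩).val + 1 :=
        bwd1_specA τ (t + 1) u2 (by omega)
      have s3 : τ ⟨t + 1, u2⟩ ≠ τ ⟨t, u1⟩ + 1 := hC t u2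
      have hvt : (τ ⟨t, u1⟩).val ≠ M := by
        intro hM
        have h4 : τ ⟨t, u1⟩ = τ ⟨(τ.symm ⟨M, Nat.lt_succ_self M⟩).val, hrv⟩ := by
          rw [hr]; exact Fin.ext hM
        have := congrArg Fin.val (τ.injective h4)
        omega
      apply s3
      apply Fin.ext
      rw [fin_add_one_val, Nat.mod_eq_of_lt (by omega)]
      omega
    · -- t + 1 is the insertion point : letter 0 there, fine
      have e1 : (⟨t + 1, ht⟩ : Fin (M + 2)) = ⟨(τ.symm ⟨M, Nat.lt_succ_self M⟩).val + 1,
          Nat.succ_lt_succ (Fin.is_lt _)⟩ := Fin.ext (by simp only [val_mk']; omega)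
      rw [e1, bwd1_p] at hE
      simp at hE
    · -- t at or after the insertion point
      rcases Nat.eq_or_lt_of_le hc with hc2 | hc2
      · -- t = insertion point : pair (0, z) with z ≠ 1
        have u1 : t < M + 1 := by omega
        have s2 : (bwd1 τ ⟨t + 1, ht⟩).val = (τ ⟨t, u1⟩).val + 1 :=
          bwd1_specB τ t u1 (by omega)
        have e1 : (⟨t, Nat.lt_of_succ_lt ht⟩ : Fin (M + 2))
            = ⟨(τ.symm ⟨M, Nat.lt_succ_self M⟩).val + 1,
              Nat.succ_lt_succ (Fin.is_lt _)⟩ := Fin.ext (by simp only [val_mk']; omega)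
        rw [e1, bwd1_p] at hE
        have u2 : (τ.symm ⟨M, Nat.lt_succ_self M⟩).val + 1 < M + 1 := by omega
        have s3 : τ ⟨(τ.symm ⟨M, Nat.lt_succ_self M⟩).val + 1, u2⟩
            ≠ τ ⟨(τ.symm ⟨M, Nat.lt_succ_self M⟩).val, hrv⟩ + 1 :=
          hC (τ.symm ⟨M, Nat.lt_succ_self M⟩).val u2
        apply s3
        have e2 : (τ ⟨(τ.symm ⟨M, Nat.lt_succ_self M⟩).val + 1, u2⟩).val = 0 := by
          have e3 : (⟨(τ.symm ⟨M, Nat.lt_succ_self M⟩).val + 1, u2⟩ : Fin (M + 1))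
              = ⟨t, u1⟩ := Fin.ext (by simp only [val_mk']; omega)
          rw [e3]
          simp only [val_mk'] at hE
          omega
        apply Fin.ext
        rw [e2, hr, fin_add_one_val]
        simp [Nat.mod_self]
      · -- strictly after
        have u0 : t - 1 < M + 1 := by omega
        have u1 : t < M + 1 := by omega
        have s1 : (bwd1 τ ⟨t, Nat.lt_of_succ_lt ht⟩).val = (τ ⟨t - 1, u0⟩).val + 1 := by
          have h5 := bwd1_specB τ (t - 1) u0 (by omega)
          have e1 : (⟨t - 1 + 1, by omega⟩ : Fin (M + 2)) = ⟨t, Nat.lt_of_succ_lt ht⟩ :=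
            Fin.ext (by simp only [val_mk']; omega)
          rwa [e1] at h5
        have s2 : (bwd1 τ ⟨t + 1, ht⟩).val = (τ ⟨t, u1⟩).val + 1 :=
          bwd1_specB τ t u1 (by omega)
        have s3 : τ ⟨t, u1⟩ ≠ τ ⟨t - 1, u0⟩ + 1 := by
          intro hh
          have h6 := hC (t - 1) (by omega : t - 1 + 1 < M + 1)
          apply h6
          have e2 : (⟨t - 1 + 1, by omega⟩ : Fin (M + 1)) = ⟨t, u1⟩ := Fin.ext (by simp only [val_mk']; omega)
          rw [show (⟨t - 1 + 1, by omega⟩ : Fin (M + 1)) = ⟨t, u1⟩ from Fin.ext (by simp only [val_mk']; omega)]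
          exact hh
        have hvt : (τ ⟨t - 1, u0⟩).val ≠ M := by
          intro hM
          have h4 : τ ⟨t - 1, u0⟩ = τ ⟨(τ.symm ⟨M, Nat.lt_succ_self M⟩).val, hrv⟩ := by
            rw [hr]; exact Fin.ext hM
          have := congrArg Fin.val (τ.injective h4)
          omega
        apply s3
        apply Fin.ext
        rw [fin_add_one_val, Nat.mod_eq_of_lt (by omega)]
        omega
  · -- containsN1
    refine ⟨(τ.symm ⟨M, Nat.lt_succ_self M⟩).val, by omega, ?_, ?_⟩
    · have s1 : (bwd1 τ ⟨(τ.symm ⟨M, Nat.lt_succ_self M⟩).val, by omega⟩).val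
          = (τ ⟨(τ.symm ⟨M, Nat.lt_succ_self M⟩).val, hrv⟩).val + 1 :=
        bwd1_specA τ _ hrv (by omega)
      rw [hr] at s1
      exact s1
    · exact hpv
  · -- first letter
    have s1 : (bwd1 τ ⟨0, Nat.succ_pos (M + 1)⟩).val = (τ ⟨0, Nat.succ_pos M⟩).val + 1 :=
      bwd1_specA τ 0 (Nat.succ_pos M) (by omega)
    rw [h0'] at s1
    exact Fin.ext (by omega)

end Bij1b


section Bij1c

def bij1 (j : Fin (M + 2)) (j' : Fin (M + 1)) (hj : j.val = j'.val + 1) :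
    {σ : Perm (Fin (M + 2)) //
        avoidsSucc (M + 2) σ ∧ containsN1 (M + 2) σ ∧ σ ⟨0, Nat.succ_pos (M + 1)⟩ = j} ≃
    {τ : Perm (Fin (M + 1)) // CycAvoid M τ ∧ τ ⟨0, Nat.succ_pos M⟩ = j'} where
  toFun s := ⟨fwd1 s.1, fwd1_cyc s.1 s.2.1 s.2.2.1,
    fwd1_zero s.1 s.2.2.1 j j' hj s.2.2.2⟩
  invFun t := ⟨bwd1 t.1, bwd1_mem t.1 t.2.1 j j' hj t.2.2⟩
  left_inv s := by
    rcases s with ⟨σ, hA, hN, h0⟩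
    apply Subtype.ext
    dsimp only
    obtain ⟨k0, hk0, hp, htop⟩ := pos_facts σ hN
    have hpv : (σ.symm ⟨0, Nat.succ_pos (M + 1)⟩).val = k0 + 1 := by rw [hp]
    have hh : k0 < M + 1 := by omega
    have hv : ∀ (h : k0 < M + 1), (fwd1 σ ⟨k0, h⟩).val = M := by
      intro h
      have s1 : (σ ⟨k0, Nat.lt_of_succ_lt hk0⟩).val = (fwd1 σ ⟨k0, h⟩).val + 1 :=
        fwd1_specA σ k0 h (by omega)
      omega
    have hτ : (fwd1 σ).symm ⟨M, Nat.lt_succ_self M⟩ = ⟨k0, hh⟩ := by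
      rw [Equiv.symm_apply_eq]
      exact (Fin.ext (by simp only [hv, val_mk'])).symm
    have hσp : σ ⟨k0 + 1, hk0⟩ = ⟨0, Nat.succ_pos (M + 1)⟩ := by
      have := σ.apply_symm_apply ⟨0, Nat.succ_pos (M + 1)⟩
      rw [hp] at this
      exact this
    have hdel : fwd1 σ = del σ ⟨k0 + 1, hk0⟩ ⟨0, Nat.succ_pos (M + 1)⟩ := by
      unfold fwd1
      rw [hp]
    have hins : bwd1 (fwd1 σ) = ins (fwd1 σ) ⟨k0 + 1, hk0⟩ ⟨0, Nat.succ_pos (M + 1)⟩ := by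
      unfold bwd1
      congr 1
      apply Fin.ext
      simp only [hτ, val_mk']
    rw [hins, hdel]
    exact ins_del σ _ _ hσp
  right_inv t := by
    rcases t with ⟨τ, hC, h0'⟩
    apply Subtype.ext
    dsimp only
    have hq : bwd1 τ ⟨(τ.symm ⟨M, Nat.lt_succ_self M⟩).val + 1,
        Nat.succ_lt_succ (Fin.is_lt _)⟩ = ⟨0, Nat.succ_pos (M + 1)⟩ := bwd1_p τ
    have hsymm : (bwd1 τ).symm ⟨0, Nat.succ_pos (M + 1)⟩
        = ⟨(τ.symm ⟨M, Nat.lt_succ_self M⟩).val + 1, Nat.succ_lt_succ (Fin.is_lt _)⟩ := by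
      rw [Equiv.symm_apply_eq]
      exact hq.symm
    show fwd1 (bwd1 τ) = τ
    unfold fwd1
    rw [hsymm]
    exact del_ins τ _ _

end Bij1c


section DelSymm

lemma del_symm (σ : Perm (Fin (M + 1))) (p q : Fin (M + 1)) (h : σ p = q) :
    (del σ p q).symm = del σ.symm q p := by
  have h' : σ.symm q = p := by rw [Equiv.symm_apply_eq, h]
  apply Equiv.ext
  intro x
  apply (del σ p q).injective
  rw [Equiv.apply_symm_apply]
  apply q.succAbove_right_injective
  have h1 := del_spec σ p q h (del σ.symm q p x)
  have h2 := del_spec σ.symm q p h' x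
  rw [h1, h2, Equiv.apply_symm_apply]

lemma succAbove_adj (p : Fin (M + 1)) (x y : Fin M)
    (h : (p.succAbove y).val = (p.succAbove x).val + 1) : y.val = x.val + 1 := by
  have hx := succAbove_val p x
  have hy := succAbove_val p y
  split at hx <;> split at hy <;> omega

lemma succAbove_adj_of (p : Fin (M + 1)) (x y : Fin M) (hxy : y.val = x.val + 1)
    (hne : p.val ≠ y.val) : (p.succAbove y).val = (p.succAbove x).val + 1 := by
  have hx := succAbove_val p x
  have hy := succAbove_val p y
  split at hx <;> split at hy <;> omega

/-- the events: letter `i` immediately followed by letter `i+1` -/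
def Glued (M : ℕ) (σ : Perm (Fin (M + 1))) (i : ℕ) : Prop :=
  ∃ (h : i < M), (σ.symm ⟨i + 1, Nat.succ_lt_succ h⟩).val
    = (σ.symm ⟨i, Nat.lt_succ_of_lt h⟩).val + 1

end DelSymm


section Bij3

def fwd3 (M i : ℕ) (hi : i < M + 1) (σ : Perm (Fin (M + 2))) : Perm (Fin (M + 1)) :=
  del σ (σ.symm ⟨i + 1, Nat.succ_lt_succ hi⟩) ⟨i + 1, Nat.succ_lt_succ hi⟩

def bwd3 (M i : ℕ) (hi : i < M + 1) (τ : Perm (Fin (M + 1))) : Perm (Fin (M + 2)) :=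
  ins τ ⟨(τ.symm ⟨i, hi⟩).val + 1, Nat.succ_lt_succ (Fin.is_lt _)⟩ ⟨i + 1, Nat.succ_lt_succ hi⟩

lemma fwd3_spec (M i : ℕ) (hi : i < M + 1) (σ : Perm (Fin (M + 2))) (k : Fin (M + 1)) :
    σ ((σ.symm ⟨i + 1, Nat.succ_lt_succ hi⟩).succAbove k)
      = (⟨i + 1, Nat.succ_lt_succ hi⟩ : Fin (M + 2)).succAbove (fwd3 M i hi σ k) :=
  (del_spec σ _ _ (σ.apply_symm_apply _) k).symm

lemma fwd3_symm_spec (M i : ℕ) (hi : i < M + 1) (σ : Perm (Fin (M + 2))) (x : Fin (M + 1)) :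
    σ.symm ((⟨i + 1, Nat.succ_lt_succ hi⟩ : Fin (M + 2)).succAbove x)
      = (σ.symm ⟨i + 1, Nat.succ_lt_succ hi⟩).succAbove ((fwd3 M i hi σ).symm x) := by
  rw [fwd3, del_symm σ _ _ (σ.apply_symm_apply _)]
  exact (del_spec σ.symm _ _ (by rw [Equiv.symm_apply_eq, σ.apply_symm_apply]) x).symm

lemma bwd3_p (M i : ℕ) (hi : i < M + 1) (τ : Perm (Fin (M + 1))) :
    bwd3 M i hi τ ⟨(τ.symm ⟨i, hi⟩).val + 1, Nat.succ_lt_succ (Fin.is_lt _)⟩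
      = ⟨i + 1, Nat.succ_lt_succ hi⟩ :=
  ins_apply_p _ _ _

lemma fwd3_mem (M i : ℕ) (hi : i < M + 1) (T : Finset ℕ) (hiT : i ∈ T)
    (hmax : ∀ j ∈ T, j ≤ i) (σ : Perm (Fin (M + 2)))
    (h0 : σ ⟨0, Nat.succ_pos (M + 1)⟩ = ⟨0, Nat.succ_pos (M + 1)⟩)
    (hG : ∀ j ∈ T, Glued (M + 1) σ j) :
    fwd3 M i hi σ ⟨0, Nat.succ_pos M⟩ = ⟨0, Nat.succ_pos M⟩ ∧
      ∀ j ∈ T.erase i, Glued M (fwd3 M i hi σ) j := by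
  obtain ⟨hi2, hadj⟩ := hG i hiT
  have hpv : (σ.symm (⟨i + 1, Nat.succ_lt_succ hi⟩ : Fin (M + 2))).val
      = (σ.symm ⟨i, Nat.lt_succ_of_lt hi2⟩).val + 1 := hadj
  constructor
  · have e0 : (σ.symm (⟨i + 1, Nat.succ_lt_succ hi⟩ : Fin (M + 2))).succAbove
        ⟨0, Nat.succ_pos M⟩ = ⟨0, Nat.succ_pos (M + 1)⟩ := by
      apply Fin.ext
      rw [succAbove_val]
      simp only [val_mk']
      rw [if_pos (by omega)]
    have e1 := fwd3_spec M i hi σ ⟨0, Nat.succ_pos M⟩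
    rw [e0, h0] at e1
    have e2 := congrArg Fin.val e1
    rw [succAbove_val] at e2
    apply Fin.ext
    simp only [val_mk'] at e2 ⊢
    split at e2 <;> omega
  · intro j hj
    have hjT : j ∈ T := Finset.mem_of_mem_erase hj
    have hjne : j ≠ i := Finset.ne_of_mem_erase hj
    have hji : j < i := lt_of_le_of_ne (hmax j hjT) hjne
    have hjM : j < M := by omega
    obtain ⟨hj2, hadjj⟩ := hG j hjT
    refine ⟨hjM, ?_⟩
    have ex : (⟨i + 1, Nat.succ_lt_succ hi⟩ : Fin (M + 2)).succAbove
        ⟨j, Nat.lt_succ_of_lt hjM⟩ = ⟨j, Nat.lt_succ_of_lt hj2⟩ := by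
      apply Fin.ext
      rw [succAbove_val]
      simp only [val_mk']
      rw [if_pos (by omega)]
    have ey : (⟨i + 1, Nat.succ_lt_succ hi⟩ : Fin (M + 2)).succAbove
        ⟨j + 1, Nat.succ_lt_succ hjM⟩ = ⟨j + 1, Nat.succ_lt_succ hj2⟩ := by
      apply Fin.ext
      rw [succAbove_val]
      simp only [val_mk']
      rw [if_pos (by omega)]
    have sx := fwd3_symm_spec M i hi σ ⟨j, Nat.lt_succ_of_lt hjM⟩
    rw [ex] at sx
    have sy := fwd3_symm_spec M i hi σ ⟨j + 1, Nat.succ_lt_succ hjM⟩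
    rw [ey] at sy
    apply succAbove_adj (σ.symm ⟨i + 1, Nat.succ_lt_succ hi⟩)
    rw [← sx, ← sy]
    exact hadjj

lemma bwd3_mem (M i : ℕ) (hi : i < M + 1) (T : Finset ℕ) (hiT : i ∈ T)
    (hmax : ∀ j ∈ T, j ≤ i) (τ : Perm (Fin (M + 1)))
    (h0' : τ ⟨0, Nat.succ_pos M⟩ = ⟨0, Nat.succ_pos M⟩)
    (hG' : ∀ j ∈ T.erase i, Glued M τ j) :
    bwd3 M i hi τ ⟨0, Nat.succ_pos (M + 1)⟩ = ⟨0, Nat.succ_pos (M + 1)⟩ ∧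
      ∀ j ∈ T, Glued (M + 1) (bwd3 M i hi τ) j := by
  have hsv : (τ.symm ⟨i, hi⟩).val < M + 1 := Fin.is_lt _
  constructor
  · have e0 : ((⟨(τ.symm ⟨i, hi⟩).val + 1, Nat.succ_lt_succ (Fin.is_lt _)⟩ :
        Fin (M + 2)).succAbove ⟨0, Nat.succ_pos M⟩) = ⟨0, Nat.succ_pos (M + 1)⟩ := by
      apply Fin.ext
      rw [succAbove_val]
      simp only [val_mk']
      rw [if_pos (by omega)]
    have e1 := ins_apply_succAbove τ
      ⟨(τ.symm ⟨i, hi⟩).val + 1, Nat.succ_lt_succ (Fin.is_lt _)⟩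
      ⟨i + 1, Nat.succ_lt_succ hi⟩ ⟨0, Nat.succ_pos M⟩
    rw [e0, h0'] at e1
    show bwd3 M i hi τ _ = _
    rw [bwd3, e1]
    apply Fin.ext
    rw [succAbove_val]
    simp only [val_mk']
    rw [if_pos (by omega)]
  · intro j hjT
    rcases eq_or_ne j i with rfl | hjne
    · refine ⟨hi, ?_⟩
      have h1 : (bwd3 M j hi τ).symm ⟨j + 1, Nat.succ_lt_succ hi⟩
          = ⟨(τ.symm ⟨j, hi⟩).val + 1, Nat.succ_lt_succ (Fin.is_lt _)⟩ := by
        rw [Equiv.symm_apply_eq]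
        exact (bwd3_p M j hi τ).symm
      have e0 : ((⟨(τ.symm ⟨j, hi⟩).val + 1, Nat.succ_lt_succ (Fin.is_lt _)⟩ :
          Fin (M + 2)).succAbove ⟨(τ.symm ⟨j, hi⟩).val, hsv⟩)
          = ⟨(τ.symm ⟨j, hi⟩).val, Nat.lt_succ_of_lt (Fin.is_lt _)⟩ := by
        apply Fin.ext
        rw [succAbove_val]
        simp only [val_mk']
        rw [if_pos (by omega)]
      have e1 := ins_apply_succAbove τ
        ⟨(τ.symm ⟨j, hi⟩).val + 1, Nat.succ_lt_succ (Fin.is_lt _)⟩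
        ⟨j + 1, Nat.succ_lt_succ hi⟩ ⟨(τ.symm ⟨j, hi⟩).val, hsv⟩
      rw [e0] at e1
      have e2 : τ ⟨(τ.symm ⟨j, hi⟩).val, hsv⟩ = ⟨j, hi⟩ := τ.apply_symm_apply _
      rw [e2] at e1
      have e3 : (⟨j + 1, Nat.succ_lt_succ hi⟩ : Fin (M + 2)).succAbove ⟨j, hi⟩
          = ⟨j, Nat.lt_succ_of_lt hi⟩ := by
        apply Fin.ext
        rw [succAbove_val]
        simp only [val_mk']
        rw [if_pos (by omega)]
      rw [e3] at e1
      have h2 : (bwd3 M j hi τ).symm ⟨j, Nat.lt_succ_of_lt hi⟩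
          = ⟨(τ.symm ⟨j, hi⟩).val, Nat.lt_succ_of_lt (Fin.is_lt _)⟩ := by
        rw [Equiv.symm_apply_eq]
        rw [bwd3]
        exact e1.symm
      rw [h1, h2]
    · have hji : j < i := lt_of_le_of_ne (hmax j hjT) hjne
      have hjM : j < M := by omega
      obtain ⟨hjM', hadj'⟩ := hG' j (Finset.mem_erase.mpr ⟨hjne, hjT⟩)
      have hjB : j < M + 1 := by omega
      refine ⟨hjB, ?_⟩
      -- positions of j and j+1 in τ
      have hx : ∀ (hh : j < M + 1),
          (bwd3 M i hi τ).symm ⟨j, Nat.lt_succ_of_lt hjB⟩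
          = (⟨(τ.symm ⟨i, hi⟩).val + 1, Nat.succ_lt_succ (Fin.is_lt _)⟩ :
              Fin (M + 2)).succAbove (τ.symm ⟨j, hh⟩) := by
        intro hh
        rw [Equiv.symm_apply_eq, bwd3, ins_apply_succAbove, τ.apply_symm_apply]
        apply Fin.ext
        rw [succAbove_val]
        simp only [val_mk']
        rw [if_pos (by omega)]
      have hy : ∀ (hh : j + 1 < M + 1),
          (bwd3 M i hi τ).symm ⟨j + 1, Nat.succ_lt_succ hjB⟩
          = (⟨(τ.symm ⟨i, hi⟩).val + 1, Nat.succ_lt_succ (Fin.is_lt _)⟩ :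
              Fin (M + 2)).succAbove (τ.symm ⟨j + 1, hh⟩) := by
        intro hh
        rw [Equiv.symm_apply_eq, bwd3, ins_apply_succAbove, τ.apply_symm_apply]
        apply Fin.ext
        rw [succAbove_val]
        simp only [val_mk']
        rw [if_pos (by omega)]
      rw [hx (Nat.lt_succ_of_lt hjM'), hy (Nat.succ_lt_succ hjM')]
      apply succAbove_adj_of
      · exact hadj'
      · simp only [val_mk']
        intro hc
        have hxs : τ.symm ⟨j, Nat.lt_succ_of_lt hjM'⟩ = τ.symm ⟨i, hi⟩ := by
          apply Fin.ext
          omega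
        have := congrArg Fin.val (τ.symm.injective hxs)
        simp only [val_mk'] at this
        omega

def bij3 (M i : ℕ) (hi : i < M + 1) (T : Finset ℕ) (hiT : i ∈ T) (hmax : ∀ j ∈ T, j ≤ i) :
    {σ : Perm (Fin (M + 2)) //
        σ ⟨0, Nat.succ_pos (M + 1)⟩ = ⟨0, Nat.succ_pos (M + 1)⟩ ∧
          ∀ j ∈ T, Glued (M + 1) σ j} ≃
    {τ : Perm (Fin (M + 1)) //
        τ ⟨0, Nat.succ_pos M⟩ = ⟨0, Nat.succ_pos M⟩ ∧ ∀ j ∈ T.erase i, Glued M τ j} where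
  toFun s := ⟨fwd3 M i hi s.1, fwd3_mem M i hi T hiT hmax s.1 s.2.1 s.2.2⟩
  invFun t := ⟨bwd3 M i hi t.1, bwd3_mem M i hi T hiT hmax t.1 t.2.1 t.2.2⟩
  left_inv s := by
    rcases s with ⟨σ, h0, hG⟩
    apply Subtype.ext
    dsimp only
    obtain ⟨hi2, hadj⟩ := hG i hiT
    have hpv : (σ.symm (⟨i + 1, Nat.succ_lt_succ hi⟩ : Fin (M + 2))).val
        = (σ.symm ⟨i, Nat.lt_succ_of_lt hi2⟩).val + 1 := hadj
    -- position of letter i in (fwd3 σ)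
    have ex : (⟨i + 1, Nat.succ_lt_succ hi⟩ : Fin (M + 2)).succAbove ⟨i, hi⟩
        = ⟨i, Nat.lt_succ_of_lt hi2⟩ := by
      apply Fin.ext
      rw [succAbove_val]
      simp only [val_mk']
      rw [if_pos (by omega)]
    have sx := fwd3_symm_spec M i hi σ ⟨i, hi⟩
    rw [ex] at sx
    have hzv := congrArg Fin.val sx
    rw [succAbove_val] at hzv
    have hz : ((fwd3 M i hi σ).symm ⟨i, hi⟩).val + 1
        = (σ.symm (⟨i + 1, Nat.succ_lt_succ hi⟩ : Fin (M + 2))).val := by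
      split at hzv <;> omega
    have hins : bwd3 M i hi (fwd3 M i hi σ)
        = ins (fwd3 M i hi σ) (σ.symm ⟨i + 1, Nat.succ_lt_succ hi⟩)
            ⟨i + 1, Nat.succ_lt_succ hi⟩ := by
      rw [bwd3]
      congr 1
      apply Fin.ext
      simp only [val_mk']
      exact hz
    rw [hins, fwd3]
    exact ins_del σ _ _ (σ.apply_symm_apply _)
  right_inv t := by
    rcases t with ⟨τ, h0', hG'⟩
    apply Subtype.ext
    dsimp only
    have hsymm : (bwd3 M i hi τ).symm ⟨i + 1, Nat.succ_lt_succ hi⟩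
        = ⟨(τ.symm ⟨i, hi⟩).val + 1, Nat.succ_lt_succ (Fin.is_lt _)⟩ := by
      rw [Equiv.symm_apply_eq]
      exact (bwd3_p M i hi τ).symm
    show fwd3 M i hi (bwd3 M i hi τ) = τ
    rw [fwd3, hsymm, bwd3]
    exact del_ins τ _ _

end Bij3


section Count

def bij0 (M : ℕ) :
    {σ : Perm (Fin (M + 1)) // σ ⟨0, Nat.succ_pos M⟩ = ⟨0, Nat.succ_pos M⟩} ≃ Perm (Fin M) where
  toFun s := del s.1 ⟨0, Nat.succ_pos M⟩ ⟨0, Nat.succ_pos M⟩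
  invFun τ := ⟨ins τ ⟨0, Nat.succ_pos M⟩ ⟨0, Nat.succ_pos M⟩, ins_apply_p _ _ _⟩
  left_inv s := Subtype.ext (ins_del s.1 _ _ s.2)
  right_inv τ := del_ins τ _ _

lemma card_glued (K : ℕ) : ∀ (M : ℕ) (T : Finset ℕ), T ⊆ Finset.range M → T.card = K →
    Nat.card {σ : Perm (Fin (M + 1)) //
        σ ⟨0, Nat.succ_pos M⟩ = ⟨0, Nat.succ_pos M⟩ ∧ ∀ j ∈ T, Glued M σ j}
      = (M - K).factorial := by
  induction K with
  | zero =>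
    intro M T hsub hcard
    obtain rfl : T = ∅ := Finset.card_eq_zero.mp hcard
    have e1 : {σ : Perm (Fin (M + 1)) //
        σ ⟨0, Nat.succ_pos M⟩ = ⟨0, Nat.succ_pos M⟩ ∧ ∀ j ∈ (∅ : Finset ℕ), Glued M σ j}
        ≃ {σ : Perm (Fin (M + 1)) // σ ⟨0, Nat.succ_pos M⟩ = ⟨0, Nat.succ_pos M⟩} :=
      Equiv.subtypeEquivRight (fun σ => by simp)
    rw [Nat.card_congr e1, Nat.card_congr (bij0 M), Nat.card_eq_fintype_card,
      Fintype.card_perm, Fintype.card_fin]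
    congr 1
  | succ K ih =>
    intro M T hsub hcard
    have hne : T.Nonempty := Finset.card_pos.mp (by omega)
    have hiT : T.max' hne ∈ T := T.max'_mem hne
    have hmax : ∀ j ∈ T, j ≤ T.max' hne := fun j hj => T.le_max' j hj
    have hiM : T.max' hne < M := Finset.mem_range.mp (hsub hiT)
    obtain ⟨M', rfl⟩ : ∃ M', M = M' + 1 := ⟨M - 1, by omega⟩
    have hi' : T.max' hne < M' + 1 := hiM
    rw [Nat.card_congr (bij3 M' (T.max' hne) hi' T hiT hmax)]
    have hsub' : T.erase (T.max' hne) ⊆ Finset.range M' := by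
      intro j hj
      have hjT := Finset.mem_of_mem_erase hj
      have := lt_of_le_of_ne (hmax j hjT) (Finset.ne_of_mem_erase hj)
      exact Finset.mem_range.mpr (by omega)
    have hcard' : (T.erase (T.max' hne)).card = K := by
      rw [Finset.card_erase_of_mem hiT, hcard]
      omega
    rw [ih M' (T.erase (T.max' hne)) hsub' hcard']
    congr 1
    omega

lemma choose_mul_fact (M k : ℕ) (h : k ≤ M) :
    M.choose k * (M - k).factorial = Nat.ascFactorial (k + 1) (M - k) := by
  have h1 : k.factorial * (M.choose k * (M - k).factorial)
      = k.factorial * Nat.ascFactorial (k + 1) (M - k) := by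
    rw [Nat.factorial_mul_ascFactorial k (M - k)]
    have h2 := Nat.choose_mul_factorial_mul_factorial h
    have h3 : k + (M - k) = M := by omega
    rw [h3]
    calc k.factorial * (M.choose k * (M - k).factorial)
        = M.choose k * k.factorial * (M - k).factorial := by ring
      _ = M.factorial := h2
  exact Nat.eq_of_mul_eq_mul_left k.factorial_pos h1

open Finset in
lemma count_noGlued (M : ℕ) :
    Nat.card {σ : Perm (Fin (M + 1)) //
        σ ⟨0, Nat.succ_pos M⟩ = ⟨0, Nat.succ_pos M⟩ ∧ ∀ i : ℕ, ¬ Glued M σ i}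
      = numDerangements M := by
  classical
  set P0 : Perm (Fin (M + 1)) → Prop :=
    fun σ => σ ⟨0, Nat.succ_pos M⟩ = ⟨0, Nat.succ_pos M⟩ with hP0
  have key : ∀ σ : Perm (Fin (M + 1)),
      ((Finset.range M).powerset.filter (fun T => ∀ j ∈ T, Glued M σ j))
        = ((Finset.range M).filter (fun i => Glued M σ i)).powerset := by
    intro σ
    ext T
    simp only [Finset.mem_filter, Finset.mem_powerset, Finset.subset_iff,
      Finset.mem_range]
    constructor
    · rintro ⟨h1, h2⟩ j hj
      exact ⟨h1 hj, h2 j hj⟩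
    · intro h
      refine ⟨fun {j} hj => (h hj).1, fun j hj => (h hj).2⟩
  have step0 : Nat.card {σ : Perm (Fin (M + 1)) // P0 σ ∧ ∀ i : ℕ, ¬ Glued M σ i}
      = (Finset.univ.filter (fun σ => P0 σ ∧ ∀ i : ℕ, ¬ Glued M σ i)).card := by
    rw [Nat.card_eq_fintype_card, Fintype.card_subtype]
  have hBadiff : ∀ σ : Perm (Fin (M + 1)), (∀ i : ℕ, ¬ Glued M σ i)
      ↔ ((Finset.range M).filter (fun i => Glued M σ i)) = ∅ := by
    intro σ
    constructor
    · intro h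
      apply Finset.filter_eq_empty_iff.mpr
      intro i _
      exact h i
    · intro h i hg
      rcases hg with ⟨hiM, h2⟩
      have : i ∈ (Finset.range M).filter (fun i => Glued M σ i) :=
        Finset.mem_filter.mpr ⟨Finset.mem_range.mpr hiM, ⟨hiM, h2⟩⟩
      rw [h] at this
      exact absurd this (Finset.notMem_empty i)
  have main : ((Finset.univ.filter (fun σ => P0 σ ∧ ∀ i : ℕ, ¬ Glued M σ i)).card : ℤ)
      = ∑ T ∈ (Finset.range M).powerset, (-1 : ℤ) ^ T.card *
          ((Finset.univ.filter (fun σ => P0 σ ∧ ∀ j ∈ T, Glued M σ j)).card : ℤ) := by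
    have lhs1 : (Finset.univ.filter (fun σ => P0 σ ∧ ∀ i : ℕ, ¬ Glued M σ i))
        = (Finset.univ.filter P0).filter
            (fun σ => ((Finset.range M).filter (fun i => Glued M σ i)) = ∅) := by
      rw [Finset.filter_filter]
      apply Finset.filter_congr
      intro σ _
      simp only [hBadiff σ]
    rw [lhs1, ← Finset.sum_boole]
    calc ∑ σ ∈ Finset.univ.filter P0,
          (if ((Finset.range M).filter (fun i => Glued M σ i)) = ∅ then (1 : ℤ) else 0)
        = ∑ σ ∈ Finset.univ.filter P0,
            ∑ T ∈ ((Finset.range M).filter (fun i => Glued M σ i)).powerset,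
              (-1 : ℤ) ^ T.card := by
          refine Finset.sum_congr rfl (fun σ _ => ?_)
          rw [Finset.sum_powerset_neg_one_pow_card]
      _ = ∑ σ ∈ Finset.univ.filter P0, ∑ T ∈ (Finset.range M).powerset,
            (if (∀ j ∈ T, Glued M σ j) then (-1 : ℤ) ^ T.card else 0) := by
          refine Finset.sum_congr rfl (fun σ _ => ?_)
          rw [← Finset.sum_filter, key σ]
      _ = ∑ T ∈ (Finset.range M).powerset, ∑ σ ∈ Finset.univ.filter P0,
            (if (∀ j ∈ T, Glued M σ j) then (-1 : ℤ) ^ T.card else 0) := Finset.sum_comm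
      _ = ∑ T ∈ (Finset.range M).powerset, (-1 : ℤ) ^ T.card *
            ((Finset.univ.filter (fun σ => P0 σ ∧ ∀ j ∈ T, Glued M σ j)).card : ℤ) := by
          refine Finset.sum_congr rfl (fun T _ => ?_)
          have e1 : ∀ σ : Perm (Fin (M + 1)),
              (if (∀ j ∈ T, Glued M σ j) then (-1 : ℤ) ^ T.card else 0)
              = (-1 : ℤ) ^ T.card * (if (∀ j ∈ T, Glued M σ j) then (1 : ℤ) else 0) := by
            intro σ
            split <;> ring
          rw [Finset.sum_congr rfl (fun σ _ => e1 σ), ← Finset.mul_sum, Finset.sum_boole,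
            Finset.filter_filter]
  rw [step0]
  have main3 : ((Finset.univ.filter (fun σ => P0 σ ∧ ∀ i : ℕ, ¬ Glued M σ i)).card : ℤ)
      = (numDerangements M : ℤ) := by
    rw [main]
    have count_eval : ∀ T ∈ (Finset.range M).powerset,
        (-1 : ℤ) ^ T.card *
            ((Finset.univ.filter (fun σ => P0 σ ∧ ∀ j ∈ T, Glued M σ j)).card : ℤ)
          = (-1 : ℤ) ^ T.card * ((M - T.card).factorial : ℤ) := by
      intro T hT
      have h1 : (Finset.univ.filter (fun σ => P0 σ ∧ ∀ j ∈ T, Glued M σ j)).card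
          = Nat.card {σ : Perm (Fin (M + 1)) // P0 σ ∧ ∀ j ∈ T, Glued M σ j} := by
        rw [Nat.card_eq_fintype_card, Fintype.card_subtype]
      rw [h1, card_glued T.card M T (Finset.mem_powerset.mp hT) rfl]
    rw [Finset.sum_congr rfl count_eval]
    have := Finset.sum_powerset_apply_card
      (fun c => (-1 : ℤ) ^ c * ((M - c).factorial : ℤ)) (x := Finset.range M)
    rw [this, Finset.card_range, numDerangements_sum]
    refine Finset.sum_congr rfl (fun k hk => ?_)
    have hkM : k ≤ M := by
      have := Finset.mem_range.mp hk; omega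
    rw [nsmul_eq_mul, ← choose_mul_fact M k hkM]
    push_cast
    ring
  exact_mod_cast main3

end Count


section Translate

lemma cycAvoid_trans (τ : Perm (Fin (M + 1))) (c : Fin (M + 1)) (h : CycAvoid M τ) :
    CycAvoid M (τ.trans (Equiv.subRight c)) := by
  intro k hk heq
  apply h k hk
  simp only [Equiv.trans_apply, Equiv.subRight_apply] at heq
  have h2 : τ ⟨k + 1, hk⟩ - c = (τ ⟨k, Nat.lt_of_succ_lt hk⟩ + 1) - c := by
    rw [heq, sub_add_eq_add_sub]
  exact sub_left_inj.mp h2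

def bij2 (j' : Fin (M + 1)) :
    {τ : Perm (Fin (M + 1)) // CycAvoid M τ ∧ τ ⟨0, Nat.succ_pos M⟩ = j'} ≃
    {τ : Perm (Fin (M + 1)) // CycAvoid M τ ∧ τ ⟨0, Nat.succ_pos M⟩ = ⟨0, Nat.succ_pos M⟩} where
  toFun s := ⟨s.1.trans (Equiv.subRight j'), cycAvoid_trans s.1 j' s.2.1, by
    have h := s.2.2
    simp only [Equiv.trans_apply, Equiv.subRight_apply, h, sub_self]
    exact (Fin.ext (by simp)).symm⟩
  invFun t := ⟨t.1.trans (Equiv.subRight (-j')), cycAvoid_trans t.1 (-j') t.2.1, by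
    have h := t.2.2
    simp only [Equiv.trans_apply, Equiv.subRight_apply, h, sub_neg_eq_add]
    rw [show (⟨0, Nat.succ_pos M⟩ : Fin (M + 1)) = 0 from Fin.ext (by simp)]
    exact zero_add j'⟩
  left_inv s := Subtype.ext (by
    apply Equiv.ext
    intro x
    simp [Equiv.subRight_apply, sub_neg_eq_add])
  right_inv t := Subtype.ext (by
    apply Equiv.ext
    intro x
    simp [Equiv.subRight_apply, sub_neg_eq_add])

end Translate

section Link

lemma glued_iff (σ : Perm (Fin (M + 1))) (i : ℕ) :
    Glued M σ i ↔ ∃ (_ : i < M) (k : ℕ) (hk : k + 1 < M + 1),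
      (σ ⟨k, Nat.lt_of_succ_lt hk⟩).val = i ∧ (σ ⟨k + 1, hk⟩).val = i + 1 := by
  constructor
  · rintro ⟨hi, he⟩
    have hk : (σ.symm ⟨i, Nat.lt_succ_of_lt hi⟩).val + 1 < M + 1 := by
      rw [← he]
      exact Fin.is_lt _
    refine ⟨hi, (σ.symm ⟨i, Nat.lt_succ_of_lt hi⟩).val, hk, ?_, ?_⟩
    · have e1 : (⟨(σ.symm ⟨i, Nat.lt_succ_of_lt hi⟩).val, Nat.lt_of_succ_lt hk⟩ : Fin (M + 1))
          = σ.symm ⟨i, Nat.lt_succ_of_lt hi⟩ := Fin.ext rfl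
      rw [e1, σ.apply_symm_apply]
    · have e2 : (⟨(σ.symm ⟨i, Nat.lt_succ_of_lt hi⟩).val + 1, hk⟩ : Fin (M + 1))
          = σ.symm ⟨i + 1, Nat.succ_lt_succ hi⟩ := Fin.ext (by simp only [val_mk']; omega)
      rw [e2, σ.apply_symm_apply]
  · rintro ⟨hi, k, hk, h1, h2⟩
    refine ⟨hi, ?_⟩
    have e1 : σ.symm ⟨i, Nat.lt_succ_of_lt hi⟩ = ⟨k, Nat.lt_of_succ_lt hk⟩ := by
      rw [Equiv.symm_apply_eq]
      exact (Fin.ext (by simp only [val_mk']; omega)).symm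
    have e2 : σ.symm ⟨i + 1, Nat.succ_lt_succ hi⟩ = ⟨k + 1, hk⟩ := by
      rw [Equiv.symm_apply_eq]
      exact (Fin.ext (by simp only [val_mk']; omega)).symm
    rw [e1, e2]

lemma link (τ : Perm (Fin (M + 1))) :
    (CycAvoid M τ ∧ τ ⟨0, Nat.succ_pos M⟩ = ⟨0, Nat.succ_pos M⟩) ↔
      (τ ⟨0, Nat.succ_pos M⟩ = ⟨0, Nat.succ_pos M⟩ ∧ ∀ i : ℕ, ¬ Glued M τ i) := by
  constructor
  · rintro ⟨hC, h0⟩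
    refine ⟨h0, fun i hg => ?_⟩
    obtain ⟨hi, k, hk, h1, h2⟩ := (glued_iff τ i).mp hg
    apply hC k hk
    apply Fin.ext
    rw [fin_add_one_val, h1, h2, Nat.mod_eq_of_lt (by omega)]
  · rintro ⟨h0, hng⟩
    refine ⟨?_, h0⟩
    intro k hk heq
    by_cases hcase : (τ ⟨k, Nat.lt_of_succ_lt hk⟩).val < M
    · apply hng (τ ⟨k, Nat.lt_of_succ_lt hk⟩).val
      apply (glued_iff τ _).mpr
      refine ⟨hcase, k, hk, rfl, ?_⟩
      rw [heq, fin_add_one_val, Nat.mod_eq_of_lt (by omega)]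
    · have hM : (τ ⟨k, Nat.lt_of_succ_lt hk⟩).val = M := by
        have := Fin.is_lt (τ ⟨k, Nat.lt_of_succ_lt hk⟩)
        omega
      have h2 : τ ⟨k + 1, hk⟩ = τ ⟨0, Nat.succ_pos M⟩ := by
        rw [h0]
        apply Fin.ext
        have hv := congrArg Fin.val heq
        rw [fin_add_one_val, hM, Nat.mod_self] at hv
        simp only [val_mk']
        exact hv
      have := congrArg Fin.val (τ.injective h2)
      simp only [val_mk'] at this
      omega

end Link

end Stmt16

theorem stmt_16 (n : ℕ) (hn : 2 ≤ n) (j : Fin n) (hj : 1 ≤ j.val) :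
    Nat.card {σ : Equiv.Perm (Fin n) //
        avoidsSucc n σ ∧ containsN1 n σ ∧ σ ⟨0, by omega⟩ = j} =
      numDerangements (n - 2) := by

  obtain ⟨M, rfl⟩ : ∃ M, n = M + 2 := ⟨n - 2, by omega⟩
  have hjv : j.val < M + 2 := j.isLt
  have hj1 : j.val - 1 < M + 1 := by omega
  have hjj : j.val = (⟨j.val - 1, hj1⟩ : Fin (M + 1)).val + 1 := by
    simp only [Stmt16.val_mk']
    omega
  have total : Nat.card {σ : Perm (Fin (M + 2)) //
      avoidsSucc (M + 2) σ ∧ containsN1 (M + 2) σ ∧ σ ⟨0, Nat.succ_pos (M + 1)⟩ = j}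
      = numDerangements M := by
    rw [Nat.card_congr (Stmt16.bij1 j ⟨j.val - 1, hj1⟩ hjj),
      Nat.card_congr (Stmt16.bij2 ⟨j.val - 1, hj1⟩),
      Nat.card_congr (Equiv.subtypeEquivRight (fun τ => Stmt16.link τ)),
      Stmt16.count_noGlued M]
  exact total
end

section
/- For every integer n ≥ 4, the arrangements of {1,…,n} avoiding all patterns 12, 23, …, (n−1)n are NOT equidistributed: there exist first digits j, j′ ∈ {1,…,n} such that the number of such arrangements with σ(1) = j differs from the number with σ(1) = j′. -/
section Aux

variable {n : ℕ}

lemma aux_val_add_one (hn : 2 ≤ n) (a b : Fin n) (hb : b.val = 1) :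
    (a + b).val = if a.val = n - 1 then 0 else a.val + 1 := by
  rw [Fin.add_def]
  have := a.isLt
  simp only [hb]
  split_ifs with h
  · rw [h, Nat.sub_add_cancel (by omega), Nat.mod_self]
  · rw [Nat.mod_eq_of_lt (by omega)]

/-- Witness permutation digits `2, n, 1, n-1, n-2, …, 3`. -/
def auxG (n : ℕ) (hn : 4 ≤ n) : Fin n → Fin n := fun k =>
  if k.val = 0 then ⟨1, by omega⟩
  else if k.val = 1 then ⟨n - 1, by omega⟩
  else if k.val = 2 then ⟨0, Nat.lt_of_lt_of_le (by decide) hn⟩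
  else ⟨n - 1 - (k.val - 2), by omega⟩

lemma auxG_val (hn : 4 ≤ n) (k : ℕ) (hk : k < n) :
    (auxG n hn ⟨k, hk⟩).val =
      if k = 0 then 1 else if k = 1 then n - 1
      else if k = 2 then 0 else n - 1 - (k - 2) := by
  unfold auxG
  split_ifs <;> rfl

lemma auxG_inj (hn : 4 ≤ n) : Function.Injective (auxG n hn) := by
  intro a b hab
  have ha := a.isLt
  have hb := b.isLt
  have h : (auxG n hn a).val = (auxG n hn b).val := congrArg Fin.val hab
  rcases a with ⟨a, hal⟩
  rcases b with ⟨b, hbl⟩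
  rw [auxG_val hn a hal, auxG_val hn b hbl] at h
  apply Fin.ext
  simp only
  split_ifs at h <;> omega

noncomputable def auxPerm (n : ℕ) (hn : 4 ≤ n) : Equiv.Perm (Fin n) :=
  Equiv.ofBijective (auxG n hn) (Finite.injective_iff_bijective.mp (auxG_inj hn))

lemma auxPerm_apply (hn : 4 ≤ n) (k : Fin n) : auxPerm n hn k = auxG n hn k := rfl

lemma auxPerm_avoids (hn : 4 ≤ n) : avoidsSucc n (auxPerm n hn) := by
  intro k h
  rw [auxPerm_apply, auxPerm_apply, auxG_val hn, auxG_val hn]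
  split_ifs <;> first | omega | exact (‹False›).elim

end Aux


theorem stmt_17 (n : ℕ) (hn : 4 ≤ n) :
    ∃ j j' : Fin n,
      Nat.card {σ : Equiv.Perm (Fin n) // avoidsSucc n σ ∧ σ ⟨0, by omega⟩ = j} ≠
      Nat.card {σ : Equiv.Perm (Fin n) // avoidsSucc n σ ∧ σ ⟨0, by omega⟩ = j'} := by
  classical
  refine ⟨⟨0, by omega⟩, ⟨1, by omega⟩, Nat.ne_of_lt ?_⟩
  haveI : NeZero n := ⟨by omega⟩
  haveI F0 : Fintype {σ : Equiv.Perm (Fin n) // avoidsSucc n σ ∧ σ ⟨0, by omega⟩ = ⟨0, by omega⟩} :=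
    Fintype.ofFinite _
  haveI F1 : Fintype {σ : Equiv.Perm (Fin n) // avoidsSucc n σ ∧ σ ⟨0, by omega⟩ = ⟨1, by omega⟩} :=
    Fintype.ofFinite _
  rw [Nat.card_eq_fintype_card, Nat.card_eq_fintype_card]
  have h1v : ((⟨1, by omega⟩ : Fin n)).val = 1 := rfl
  have key : ∀ (σ : Equiv.Perm (Fin n)), avoidsSucc n σ → σ ⟨0, by omega⟩ = ⟨0, by omega⟩ →
      avoidsSucc n (σ.trans (Equiv.addRight ⟨1, by omega⟩)) ∧
      (σ.trans (Equiv.addRight ⟨1, by omega⟩)) ⟨0, by omega⟩ = ⟨1, by omega⟩ := by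
    intro σ hav h0
    constructor
    · intro k h
      simp only [Equiv.trans_apply, Equiv.coe_addRight]
      rw [aux_val_add_one (by omega) _ _ h1v, aux_val_add_one (by omega) _ _ h1v]
      have hk1 : (σ ⟨k+1, h⟩).val < n := (σ _).isLt
      have hne := hav k h
      split_ifs with hc1 hc2 hc2
      · omega
      · omega
      · -- would need σ(k+1).val = 0, impossible since σ 0 = 0
        intro hc
        have h01 : σ ⟨k+1, h⟩ = σ ⟨0, by omega⟩ := by
          rw [h0]
          apply Fin.ext
          show (σ ⟨k+1, h⟩).val = 0
          omega
        have h02 := σ.injective h01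
        have : k + 1 = 0 := congrArg Fin.val h02
        omega
      · omega
    · simp only [Equiv.trans_apply, Equiv.coe_addRight, h0]
      apply Fin.ext
      have e0 : ((⟨0, by omega⟩ : Fin n)).val = 0 := rfl
      rw [aux_val_add_one (by omega) _ _ h1v, e0, if_neg (by omega : ¬((0:ℕ) = n - 1)), h1v]
  refine Fintype.card_lt_of_injective_of_notMem
    (fun σ => ⟨σ.1.trans (Equiv.addRight ⟨1, by omega⟩), key σ.1 σ.2.1 σ.2.2⟩) ?_
    (b := ⟨auxPerm n hn, auxPerm_avoids hn, ?_⟩) ?_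
  · -- injectivity
    intro a b hab
    apply Subtype.ext
    apply Equiv.ext
    intro x
    have h1 : a.1.trans (Equiv.addRight ⟨1, by omega⟩) =
        b.1.trans (Equiv.addRight ⟨1, by omega⟩) := congrArg Subtype.val hab
    have h2 := DFunLike.congr_fun h1 x
    simp only [Equiv.trans_apply, Equiv.coe_addRight] at h2
    exact add_right_cancel h2
  · -- auxPerm starts with value 1
    rw [auxPerm_apply]
    apply Fin.ext
    rw [auxG_val hn]
    rfl
  · -- not in range
    rintro ⟨a, ha⟩
    have hcc : a.1.trans (Equiv.addRight ⟨1, by omega⟩) = auxPerm n hn :=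
      congrArg Subtype.val ha
    have h2n : 1 + 1 < n := by omega
    have h1 : ((a.1 ⟨1, Nat.lt_of_succ_lt h2n⟩) + ⟨1, by omega⟩).val = n - 1 := by
      have h := DFunLike.congr_fun hcc ⟨1, Nat.lt_of_succ_lt h2n⟩
      simp only [Equiv.trans_apply, Equiv.coe_addRight] at h
      rw [h, auxPerm_apply, auxG_val hn]
      norm_num
    have h2 : ((a.1 ⟨1 + 1, h2n⟩) + ⟨1, by omega⟩).val = 0 := by
      have h := DFunLike.congr_fun hcc ⟨1 + 1, h2n⟩
      simp only [Equiv.trans_apply, Equiv.coe_addRight] at h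
      rw [h, auxPerm_apply, auxG_val hn]
      norm_num
    rw [aux_val_add_one (by omega) _ _ h1v] at h1 h2
    have hv1 : (a.1 ⟨1, Nat.lt_of_succ_lt h2n⟩).val = n - 2 := by
      by_cases hx : (a.1 ⟨1, Nat.lt_of_succ_lt h2n⟩).val = n - 1
      · rw [if_pos hx] at h1; omega
      · rw [if_neg hx] at h1; omega
    have hv2 : (a.1 ⟨1 + 1, h2n⟩).val = n - 1 := by
      by_cases hx : (a.1 ⟨1 + 1, h2n⟩).val = n - 1
      · exact hx
      · rw [if_neg hx] at h2; omega
    have hcon := a.2.1 1 h2n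
    rw [hv1, hv2] at hcon
    omega
end

section
/- For every integer n ≥ 2, n−1 divides the number of arrangements of {1,…,n} that avoid all patterns 12, 23, …, (n−1)n but contain the pattern n1. -/
set_option maxHeartbeats 2000000

namespace Stmt19

open Equiv

lemma valmk {n a : ℕ} (h : a < n) : ((⟨a, h⟩ : Fin n) : ℕ) = a := rfl

/-- cyclic succession avoidance for words of length `m+1` on `{0,…,m}`. -/
def cycAvoid (m : ℕ) (w : Equiv.Perm (Fin (m+1))) : Prop :=
  ∀ (k : ℕ) (h : k + 1 < m + 1),
    (w ⟨k+1, h⟩).val ≠ ((w ⟨k, Nat.lt_of_succ_lt h⟩).val + 1) % (m+1)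

variable {m : ℕ}

/-- insert positions: skip position `p`. -/
def insPos (m p : ℕ) (j : Fin (m+1)) : Fin (m+2) :=
  if j.val < p then ⟨j.val, by omega⟩ else ⟨j.val + 1, by omega⟩

lemma insPos_ne (p : ℕ) (j : Fin (m+1)) : (insPos m p j).val ≠ p := by
  unfold insPos; split <;> simp only [valmk] <;> omega

lemma insPos_inj (p : ℕ) {j₁ j₂ : Fin (m+1)} (h : insPos m p j₁ = insPos m p j₂) :
    j₁ = j₂ := by
  have hv := congrArg Fin.val h
  unfold insPos at hv
  apply Fin.ext
  split at hv <;> split at hv <;> simp only [valmk] at hv <;> omega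

lemma insPos_mk_lt {p k : ℕ} (hk : k < m + 1) (h : k < p) :
    insPos m p ⟨k, hk⟩ = ⟨k, by omega⟩ := by
  unfold insPos; rw [if_pos h]

lemma insPos_mk_ge {p k : ℕ} (hk : k < m + 1) (h : ¬ k < p) :
    insPos m p ⟨k, hk⟩ = ⟨k + 1, by omega⟩ := by
  unfold insPos; rw [if_neg h]

lemma sigma_pos (σ : Perm (Fin (m+2))) (x : Fin (m+2))
    (hx : x.val ≠ (σ.symm 0).val) : 1 ≤ (σ x).val := by
  by_contra h0
  have hz : σ x = 0 := Fin.ext (by simp only [Fin.val_zero]; omega)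
  have hxe : x = σ.symm 0 := by rw [← hz, Equiv.symm_apply_apply]
  exact hx (congrArg Fin.val hxe)

def conFun (σ : Perm (Fin (m+2))) (j : Fin (m+1)) : Fin (m+1) :=
  ⟨(σ (insPos m (σ.symm 0).val j)).val - 1, by
    have := (σ (insPos m (σ.symm 0).val j)).isLt; omega⟩

lemma conFun_val (σ : Perm (Fin (m+2))) (j : Fin (m+1)) :
    (conFun σ j).val = (σ (insPos m (σ.symm 0).val j)).val - 1 := rfl

lemma conFun_pos (σ : Perm (Fin (m+2))) (j : Fin (m+1)) :
    1 ≤ (σ (insPos m (σ.symm 0).val j)).val :=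
  sigma_pos σ _ (insPos_ne _ j)

noncomputable def conPerm (σ : Perm (Fin (m+2))) : Perm (Fin (m+1)) :=
  Equiv.ofBijective (conFun σ) (Finite.injective_iff_bijective.mp (by
    intro j₁ j₂ hj
    have hv := congrArg Fin.val hj
    rw [conFun_val, conFun_val] at hv
    have h1 := conFun_pos σ j₁
    have h2 := conFun_pos σ j₂
    have : (σ (insPos m (σ.symm 0).val j₁)).val = (σ (insPos m (σ.symm 0).val j₂)).val := by
      omega
    exact insPos_inj _ (σ.injective (Fin.ext this))))

@[simp] lemma conPerm_apply (σ : Perm (Fin (m+2))) (j : Fin (m+1)) :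
    conPerm σ j = conFun σ j := rfl

def expTop (w : Perm (Fin (m+1))) : ℕ := (w.symm ⟨m, Nat.lt_succ_self m⟩).val

lemma expTop_le (w : Perm (Fin (m+1))) : expTop w ≤ m :=
  Nat.lt_succ_iff.mp (Fin.isLt _)

lemma expTop_spec (w : Perm (Fin (m+1))) :
    (w ⟨expTop w, by have := expTop_le w; omega⟩).val = m := by
  have e : (⟨expTop w, by have := expTop_le w; omega⟩ : Fin (m+1)) =
      w.symm ⟨m, Nat.lt_succ_self m⟩ := Fin.ext rfl
  rw [e, Equiv.apply_symm_apply]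

def expIdx (q x : ℕ) : ℕ := if x < q + 1 then x else x - 1

def expFun (w : Perm (Fin (m+1))) (x : Fin (m+2)) : Fin (m+2) :=
  if x.val = expTop w + 1 then 0
  else ⟨(w ⟨min (expIdx (expTop w) x.val) m, by omega⟩).val + 1, by
    have := Fin.isLt (w ⟨min (expIdx (expTop w) x.val) m, by omega⟩); omega⟩

lemma expFun_mk_eq (w : Perm (Fin (m+1))) {k : ℕ} (hk : k < m + 2)
    (h : k = expTop w + 1) : expFun w ⟨k, hk⟩ = 0 := by
  unfold expFun; rw [if_pos h]

lemma expFun_mk_lt (w : Perm (Fin (m+1))) {k : ℕ} (hk : k < m + 2)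
    (h : k < expTop w + 1) :
    (expFun w ⟨k, hk⟩).val = (w ⟨k, by have := expTop_le w; omega⟩).val + 1 := by
  unfold expFun
  rw [if_neg (show ¬((⟨k, hk⟩ : Fin (m+2)).val = expTop w + 1) from by
    simp only [valmk]; omega)]
  simp only [valmk]
  have e : (⟨min (expIdx (expTop w) k) m, by omega⟩ : Fin (m+1)) =
      ⟨k, by have := expTop_le w; omega⟩ := by
    apply Fin.ext
    simp only [valmk, expIdx]
    rw [if_pos h]
    have := expTop_le w
    omega
  rw [e]

lemma expFun_mk_gt (w : Perm (Fin (m+1))) {k : ℕ} (hk : k < m + 2)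
    (h1 : k ≠ expTop w + 1) (h2 : ¬ k < expTop w + 1) :
    (expFun w ⟨k, hk⟩).val = (w ⟨k - 1, by omega⟩).val + 1 := by
  unfold expFun
  rw [if_neg (show ¬((⟨k, hk⟩ : Fin (m+2)).val = expTop w + 1) from by
    simp only [valmk]; omega)]
  simp only [valmk]
  have e : (⟨min (expIdx (expTop w) k) m, by omega⟩ : Fin (m+1)) =
      ⟨k - 1, by omega⟩ := by
    apply Fin.ext
    simp only [valmk, expIdx]
    rw [if_neg h2]
    omega
  rw [e]

lemma expFun_pos (w : Perm (Fin (m+1))) {k : ℕ} (hk : k < m + 2)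
    (h1 : k ≠ expTop w + 1) : 1 ≤ (expFun w ⟨k, hk⟩).val := by
  by_cases h2 : k < expTop w + 1
  · rw [expFun_mk_lt w hk h2]; omega
  · rw [expFun_mk_gt w hk h1 h2]; omega

noncomputable def expPerm (w : Perm (Fin (m+1))) : Perm (Fin (m+2)) :=
  Equiv.ofBijective (expFun w) (Finite.injective_iff_bijective.mp (by
    intro x y hxy
    obtain ⟨xv, hxl⟩ := x
    obtain ⟨yv, hyl⟩ := y
    by_cases hx : xv = expTop w + 1 <;> by_cases hy : yv = expTop w + 1
    · exact Fin.ext (by simp only [valmk]; omega)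
    · exfalso
      rw [expFun_mk_eq w hxl hx] at hxy
      have := expFun_pos w hyl hy
      rw [← hxy] at this
      simp at this
    · exfalso
      rw [expFun_mk_eq w hyl hy] at hxy
      have := expFun_pos w hxl hx
      rw [hxy] at this
      simp at this
    · have hv := congrArg Fin.val hxy
      by_cases hx2 : xv < expTop w + 1 <;> by_cases hy2 : yv < expTop w + 1
      · rw [expFun_mk_lt w hxl hx2, expFun_mk_lt w hyl hy2] at hv
        have e := congrArg Fin.val (w.injective (a₁ := ⟨xv, by have := expTop_le w; omega⟩)
          (a₂ := ⟨yv, by have := expTop_le w; omega⟩) (Fin.ext (by omega)))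
        simp only [valmk] at e
        exact Fin.ext (by simp only [valmk]; omega)
      · exfalso
        rw [expFun_mk_lt w hxl hx2, expFun_mk_gt w hyl hy hy2] at hv
        have e := congrArg Fin.val (w.injective (a₁ := ⟨xv, by have := expTop_le w; omega⟩)
          (a₂ := ⟨yv - 1, by omega⟩) (Fin.ext (by omega)))
        simp only [valmk] at e
        omega
      · exfalso
        rw [expFun_mk_gt w hxl hx hx2, expFun_mk_lt w hyl hy2] at hv
        have e := congrArg Fin.val (w.injective (a₁ := ⟨xv - 1, by omega⟩)
          (a₂ := ⟨yv, by have := expTop_le w; omega⟩) (Fin.ext (by omega)))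
        simp only [valmk] at e
        omega
      · rw [expFun_mk_gt w hxl hx hx2, expFun_mk_gt w hyl hy hy2] at hv
        have e := congrArg Fin.val (w.injective (a₁ := ⟨xv - 1, by omega⟩)
          (a₂ := ⟨yv - 1, by omega⟩) (Fin.ext (by omega)))
        simp only [valmk] at e
        exact Fin.ext (by simp only [valmk]; omega)))

@[simp] lemma expPerm_apply (w : Perm (Fin (m+1))) (x : Fin (m+2)) :
    expPerm w x = expFun w x := rfl

lemma contains_spec (σ : Perm (Fin (m+2))) (hC : containsN1 (m+2) σ) :
    1 ≤ (σ.symm 0).val ∧ (σ.symm 0).val < m + 2 ∧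
      ∀ (h' : (σ.symm 0).val - 1 < m + 2), (σ ⟨(σ.symm 0).val - 1, h'⟩).val = m + 1 := by
  obtain ⟨k, hk, htop, hz⟩ := hC
  have hsy : σ.symm 0 = ⟨k+1, hk⟩ := by
    rw [Equiv.symm_apply_eq]
    exact (Fin.ext hz.symm)
  have hv : (σ.symm 0).val = k + 1 := congrArg Fin.val hsy
  refine ⟨by omega, by omega, ?_⟩
  intro h'
  have e : (⟨(σ.symm 0).val - 1, h'⟩ : Fin (m+2)) = ⟨k, Nat.lt_of_succ_lt hk⟩ :=
    Fin.ext (by simp only [valmk]; omega)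
  rw [e, htop]
  omega

lemma top_unique (σ : Perm (Fin (m+2))) {x y : Fin (m+2)}
    (hx : (σ x).val = m + 1) (hy : (σ y).val = m + 1) : x = y :=
  σ.injective (Fin.ext (hx.trans hy.symm))

lemma symm_zero_val (σ : Perm (Fin (m+2))) {k : ℕ} (hk : k < m + 2)
    (h : (σ ⟨k, hk⟩).val = 0) : (σ.symm 0).val = k := by
  have : σ.symm 0 = ⟨k, hk⟩ := by
    rw [Equiv.symm_apply_eq]
    exact Fin.ext h.symm
  exact congrArg Fin.val this

lemma con_avoid (σ : Perm (Fin (m+2))) (hA : avoidsSucc (m+2) σ)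
    (hC : containsN1 (m+2) σ) : cycAvoid m (conPerm σ) := by
  obtain ⟨hp1, hp2, htop⟩ := contains_spec σ hC
  have htop' := htop (by omega)
  intro k h
  simp only [conPerm_apply]
  rw [conFun_val, conFun_val]
  by_cases h1 : k + 1 < (σ.symm 0).val
  · -- positions k, k+1 both before the zero
    rw [insPos_mk_lt (m := m) (p := (σ.symm 0).val) (k := k + 1) (by omega) (by omega),
        insPos_mk_lt (m := m) (p := (σ.symm 0).val) (k := k) (by omega) (by omega)]
    have hne := hA k (by omega)
    have hlt : (σ (⟨k, by omega⟩ : Fin (m+2))).val ≠ m + 1 := by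
      intro he
      have e := congrArg Fin.val (top_unique σ he htop')
      simp only [valmk] at e
      omega
    have hb := (σ (⟨k, by omega⟩ : Fin (m+2))).isLt
    have hs1 : 1 ≤ (σ (⟨k, by omega⟩ : Fin (m+2))).val :=
      sigma_pos σ _ (by simp only [valmk]; omega)
    have hs2 : 1 ≤ (σ (⟨k+1, by omega⟩ : Fin (m+2))).val :=
      sigma_pos σ _ (by simp only [valmk]; omega)
    have hmod : ((σ (⟨k, by omega⟩ : Fin (m+2))).val - 1 + 1) % (m+1)
        = (σ (⟨k, by omega⟩ : Fin (m+2))).val - 1 + 1 := Nat.mod_eq_of_lt (by omega)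
    rw [hmod]
    omega
  · by_cases h2 : k < (σ.symm 0).val
    · -- k = p - 1, value m+1 at k; next inserted position is k+2 = p+1
      rw [insPos_mk_ge (m := m) (p := (σ.symm 0).val) (k := k + 1) (by omega) (by omega),
          insPos_mk_lt (m := m) (p := (σ.symm 0).val) (k := k) (by omega) (by omega)]
      have ha : (σ (⟨k, by omega⟩ : Fin (m+2))).val = m + 1 := by
        rw [show (⟨k, by omega⟩ : Fin (m+2)) = ⟨(σ.symm 0).val - 1, by omega⟩ from
          Fin.ext (by simp only [valmk]; omega)]
        exact htop'
      have hmod : ((σ (⟨k, by omega⟩ : Fin (m+2))).val - 1 + 1) % (m + 1) = 0 := by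
        rw [show (σ (⟨k, by omega⟩ : Fin (m+2))).val - 1 + 1 = m + 1 from by omega,
          Nat.mod_self]
      rw [hmod]
      -- value at position k+2 = p+1 is not 1
      have hb : k + 1 + 1 < m + 2 := by omega
      have hne := hA (k+1) hb
      have e2 : (⟨k+1, Nat.lt_of_succ_lt hb⟩ : Fin (m+2)) = σ.symm 0 :=
        Fin.ext (by simp only [valmk]; omega)
      rw [e2, Equiv.apply_symm_apply, Fin.val_zero] at hne
      have hs2 : 1 ≤ (σ (⟨k+1+1, by omega⟩ : Fin (m+2))).val :=
        sigma_pos σ _ (by simp only [valmk]; omega)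
      omega
    · -- positions k+1, k+2 both after the zero
      rw [insPos_mk_ge (m := m) (p := (σ.symm 0).val) (k := k + 1) (by omega) (by omega),
          insPos_mk_ge (m := m) (p := (σ.symm 0).val) (k := k) (by omega) (by omega)]
      have hb : k + 1 + 1 < m + 2 := by omega
      have hne := hA (k+1) hb
      have hlt : (σ (⟨k+1, by omega⟩ : Fin (m+2))).val ≠ m + 1 := by
        intro he
        have e := congrArg Fin.val (top_unique σ he htop')
        simp only [valmk] at e
        omega
      have hbv := (σ (⟨k+1, by omega⟩ : Fin (m+2))).isLt
      have hs1 : 1 ≤ (σ (⟨k+1, by omega⟩ : Fin (m+2))).val :=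
        sigma_pos σ _ (by simp only [valmk]; omega)
      have hs2 : 1 ≤ (σ (⟨k+1+1, by omega⟩ : Fin (m+2))).val :=
        sigma_pos σ _ (by simp only [valmk]; omega)
      have hmod : ((σ (⟨k+1, by omega⟩ : Fin (m+2))).val - 1 + 1) % (m+1)
          = (σ (⟨k+1, by omega⟩ : Fin (m+2))).val - 1 + 1 := Nat.mod_eq_of_lt (by omega)
      rw [hmod]
      omega

lemma exp_avoid (w : Perm (Fin (m+1))) (hw : cycAvoid m w) :
    avoidsSucc (m+2) (expPerm w) ∧ containsN1 (m+2) (expPerm w) := by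
  have htl := expTop_le w
  have hts := expTop_spec w
  constructor
  · intro k h
    simp only [expPerm_apply]
    by_cases h1 : k + 1 = expTop w + 1
    · -- the value at position k+1 is 0
      rw [expFun_mk_eq w h h1]
      simp only [Fin.val_zero]
      omega
    · by_cases h2 : k = expTop w + 1
      · -- previous value is 0; value at k+1 = expTop w + 2 is not 1
        subst h2
        rw [expFun_mk_eq w (Nat.lt_of_succ_lt h) rfl]
        simp only [Fin.val_zero]
        rw [expFun_mk_gt w h (by omega) (by omega)]
        have hcy := hw (expTop w) (by omega)
        have h0 : ((w (⟨expTop w, by omega⟩ : Fin (m+1))).val + 1) % (m+1) = 0 := by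
          rw [hts]
          exact Nat.mod_self _
        rw [h0] at hcy
        have e2 : (w (⟨expTop w + 1 + 1 - 1, by omega⟩ : Fin (m+1))).val =
            (w (⟨expTop w + 1, by omega⟩ : Fin (m+1))).val :=
          congrArg (fun t => (w t).val) (Fin.ext (by simp only [valmk]; omega))
        omega
      · by_cases h3 : k < expTop w + 1
        · -- both positions strictly before the zero
          have h4 : k + 1 < expTop w + 1 := by omega
          rw [expFun_mk_lt w h h4, expFun_mk_lt w (Nat.lt_of_succ_lt h) h3]
          have hib : k + 1 < m + 1 := by omega
          have hcy := hw k hib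
          have hlt : (w (⟨k, by omega⟩ : Fin (m+1))).val ≠ m := by
            intro he
            have e := congrArg Fin.val (w.injective (a₁ := ⟨k, by omega⟩)
              (a₂ := ⟨expTop w, by omega⟩) (Fin.ext (he.trans hts.symm)))
            simp only [valmk] at e
            omega
          have hwb := (w (⟨k, by omega⟩ : Fin (m+1))).isLt
          have hmod : ((w (⟨k, by omega⟩ : Fin (m+1))).val + 1) % (m+1)
              = (w (⟨k, by omega⟩ : Fin (m+1))).val + 1 := Nat.mod_eq_of_lt (by omega)
          rw [hmod] at hcy
          omega
        · -- both positions strictly after the zero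
          have h4 : ¬ k + 1 < expTop w + 1 := by omega
          rw [expFun_mk_gt w h (by omega) h4,
              expFun_mk_gt w (Nat.lt_of_succ_lt h) h2 h3]
          have hib : (k - 1) + 1 < m + 1 := by omega
          have hcy := hw (k - 1) hib
          have e1 : (w (⟨(k - 1) + 1, hib⟩ : Fin (m+1))).val =
              (w (⟨k + 1 - 1, by omega⟩ : Fin (m+1))).val :=
            congrArg (fun t => (w t).val) (Fin.ext (by simp only [valmk]; omega))
          rw [e1] at hcy
          have hlt : (w (⟨k - 1, by omega⟩ : Fin (m+1))).val ≠ m := by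
            intro he
            have e := congrArg Fin.val (w.injective (a₁ := ⟨k - 1, by omega⟩)
              (a₂ := ⟨expTop w, by omega⟩) (Fin.ext (he.trans hts.symm)))
            simp only [valmk] at e
            omega
          have hwb := (w (⟨k - 1, by omega⟩ : Fin (m+1))).isLt
          have hmod : ((w (⟨k - 1, by omega⟩ : Fin (m+1))).val + 1) % (m+1)
              = (w (⟨k - 1, by omega⟩ : Fin (m+1))).val + 1 := Nat.mod_eq_of_lt (by omega)
          rw [hmod] at hcy
          omega
  · refine ⟨expTop w, by omega, ?_, ?_⟩
    · simp only [expPerm_apply]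
      rw [expFun_mk_lt w (k := expTop w) (by omega) (by omega), hts]
      omega
    · simp only [expPerm_apply]
      rw [expFun_mk_eq w (k := expTop w + 1) (by omega) rfl, Fin.val_zero]

lemma exp_symm_zero (w : Perm (Fin (m+1))) :
    ((expPerm w).symm 0).val = expTop w + 1 := by
  apply symm_zero_val (expPerm w) (by have := expTop_le w; omega)
  show (expFun w ⟨expTop w + 1, _⟩).val = 0
  rw [expFun_mk_eq w _ rfl, Fin.val_zero]

lemma con_exp (w : Perm (Fin (m+1))) : conPerm (expPerm w) = w := by
  have htl := expTop_le w
  apply Equiv.ext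
  intro j
  apply Fin.ext
  simp only [conPerm_apply]
  rw [conFun_val, exp_symm_zero]
  obtain ⟨jv, hj⟩ := j
  by_cases hlt : jv < expTop w + 1
  · rw [insPos_mk_lt (m := m) (p := expTop w + 1) (k := jv) (by omega) hlt]
    simp only [expPerm_apply]
    rw [expFun_mk_lt w (k := jv) (by omega) hlt]
    omega
  · rw [insPos_mk_ge (m := m) (p := expTop w + 1) (k := jv) (by omega) hlt]
    simp only [expPerm_apply]
    rw [expFun_mk_gt w (k := jv + 1) (by omega) (by omega) (by omega)]
    have e : (w (⟨jv + 1 - 1, by omega⟩ : Fin (m+1))).val =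
        (w (⟨jv, hj⟩ : Fin (m+1))).val :=
      congrArg (fun t => (w t).val) (Fin.ext (by simp only [valmk]; omega))
    rw [e]
    omega

lemma exp_con (σ : Perm (Fin (m+2))) (hA : avoidsSucc (m+2) σ)
    (hC : containsN1 (m+2) σ) : expPerm (conPerm σ) = σ := by
  obtain ⟨hp1, hp2, htop⟩ := contains_spec σ hC
  have htop' := htop (by omega)
  have htq : expTop (conPerm σ) = (σ.symm 0).val - 1 := by
    unfold expTop
    have hcv : conPerm σ ⟨(σ.symm 0).val - 1, by omega⟩ = ⟨m, Nat.lt_succ_self m⟩ := by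
      apply Fin.ext
      rw [conPerm_apply, conFun_val,
        insPos_mk_lt (m := m) (p := (σ.symm 0).val) (k := (σ.symm 0).val - 1) (by omega) (by omega)]
      rw [htop']
      simp only [valmk]
      omega
    have hsymm : (conPerm σ).symm ⟨m, Nat.lt_succ_self m⟩ =
        ⟨(σ.symm 0).val - 1, by omega⟩ :=
      (Equiv.symm_apply_eq _).mpr hcv.symm
    rw [hsymm]
  apply Equiv.ext
  intro x
  apply Fin.ext
  simp only [expPerm_apply]
  obtain ⟨xv, hx⟩ := x
  by_cases hxp : xv = (σ.symm 0).val
  · rw [expFun_mk_eq (conPerm σ) hx (by rw [htq]; omega)]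
    simp only [Fin.val_zero]
    have e : (⟨xv, hx⟩ : Fin (m+2)) = σ.symm 0 :=
      Fin.ext (by simp only [valmk]; omega)
    rw [e, Equiv.apply_symm_apply, Fin.val_zero]
  · by_cases hlt : xv < (σ.symm 0).val
    · rw [expFun_mk_lt (conPerm σ) hx (by rw [htq]; omega)]
      rw [conPerm_apply, conFun_val,
        insPos_mk_lt (m := m) (p := (σ.symm 0).val) (k := xv) (by omega) hlt]
      have hs := sigma_pos σ (⟨xv, by omega⟩ : Fin (m+2)) (by simp only [valmk]; omega)
      omega
    · rw [expFun_mk_gt (conPerm σ) hx (by rw [htq]; omega) (by rw [htq]; omega)]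
      rw [conPerm_apply, conFun_val,
        insPos_mk_ge (m := m) (p := (σ.symm 0).val) (k := xv - 1) (by omega) (by omega)]
      have e : (σ (⟨xv - 1 + 1, by omega⟩ : Fin (m+2))).val =
          (σ (⟨xv, hx⟩ : Fin (m+2))).val :=
        congrArg (fun t => (σ t).val) (Fin.ext (by simp only [valmk]; omega))
      rw [e]
      have hs := sigma_pos σ (⟨xv, hx⟩ : Fin (m+2)) (by simp only [valmk]; omega)
      omega

/-! ### Rotation action -/

lemma rot_pow_val (c : ℕ) (x : Fin (m+1)) :
    (((finRotate (m+1)) ^ c) x).val = (x.val + c) % (m+1) := by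
  induction c with
  | zero => simp [Nat.mod_eq_of_lt x.isLt]
  | succ c ih =>
    rw [pow_succ', Equiv.Perm.mul_apply, finRotate_succ_apply]
    rw [Fin.val_add, Fin.val_one', Nat.add_mod_mod, ih, Nat.mod_add_mod, Nat.add_assoc]

lemma rot_pow_top : ((finRotate (m+1)) ^ (m+1)) = 1 := by
  apply Equiv.ext
  intro x
  apply Fin.ext
  rw [rot_pow_val]
  simp [Nat.add_mod_right, Nat.mod_eq_of_lt x.isLt]

lemma succ_mod_inj {M : ℕ} (hM : 0 < M) {a b : ℕ} (ha : a < M) (hb : b < M)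
    (h : (a+1) % M = (b+1) % M) : a = b := by
  rcases Nat.lt_or_ge (a+1) M with h1 | h1 <;> rcases Nat.lt_or_ge (b+1) M with h2 | h2
  · rw [Nat.mod_eq_of_lt h1, Nat.mod_eq_of_lt h2] at h; omega
  · have hb' : b + 1 = M := by omega
    rw [Nat.mod_eq_of_lt h1, hb', Nat.mod_self] at h; omega
  · have ha' : a + 1 = M := by omega
    rw [ha', Nat.mod_self, Nat.mod_eq_of_lt h2] at h; omega
  · omega

lemma add_mod_inj {M : ℕ} (hM : 0 < M) (c : ℕ) : ∀ {a b : ℕ}, a < M → b < M →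
    (a + c) % M = (b + c) % M → a = b := by
  induction c with
  | zero =>
    intro a b ha hb h
    rwa [Nat.add_zero, Nat.add_zero, Nat.mod_eq_of_lt ha, Nat.mod_eq_of_lt hb] at h
  | succ c ih =>
    intro a b ha hb h
    have e : ∀ x : ℕ, (x + (c+1)) % M = ((x + c) % M + 1) % M := fun x => by
      rw [Nat.mod_add_mod]
      rfl
    rw [e a, e b] at h
    have h2 := succ_mod_inj hM (Nat.mod_lt _ hM) (Nat.mod_lt _ hM) h
    exact ih ha hb h2

lemma rot_avoid (c : ℕ) (w : Perm (Fin (m+1))) (hw : cycAvoid m w) :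
    cycAvoid m ((finRotate (m+1)) ^ c * w) := by
  intro k h
  simp only [Equiv.Perm.mul_apply]
  rw [rot_pow_val, rot_pow_val]
  intro he
  apply hw k h
  have he2 : ((w ⟨k+1, h⟩).val + c) % (m+1)
      = (((w ⟨k, Nat.lt_of_succ_lt h⟩).val + 1) % (m+1) + c) % (m+1) := by
    rw [he, Nat.mod_add_mod, Nat.mod_add_mod]
    congr 1
    omega
  exact add_mod_inj (by omega) c (w ⟨k+1, h⟩).isLt (Nat.mod_lt _ (by omega)) he2

noncomputable def rotEquiv (m : ℕ) : {w : Equiv.Perm (Fin (m+1)) // cycAvoid m w} ≃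
    Fin (m+1) × {w : Equiv.Perm (Fin (m+1)) // cycAvoid m w ∧ w 0 = 0} where
  toFun s := (s.1 0, ⟨(finRotate (m+1)) ^ (m + 1 - (s.1 0).val) * s.1,
    rot_avoid _ _ s.2, by
      apply Fin.ext
      rw [Equiv.Perm.mul_apply, rot_pow_val]
      have := (s.1 0).isLt
      rw [show (s.1 0).val + (m + 1 - (s.1 0).val) = m + 1 by omega, Nat.mod_self]
      rfl⟩)
  invFun p := ⟨(finRotate (m+1)) ^ (p.1).val * p.2.1, rot_avoid _ _ p.2.2.1⟩
  left_inv s := by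
    apply Subtype.ext
    show (finRotate (m+1)) ^ _ * ((finRotate (m+1)) ^ _ * s.1) = s.1
    rw [← mul_assoc, ← pow_add]
    have := (s.1 0).isLt
    rw [show (s.1 0).val + (m + 1 - (s.1 0).val) = m + 1 by omega, rot_pow_top, one_mul]
  right_inv p := by
    obtain ⟨c, w, hw, hz⟩ := p
    have hzv : (w 0).val = 0 := congrArg Fin.val hz
    have h1 : (((finRotate (m+1)) ^ c.val * w) 0) = c := by
      apply Fin.ext
      rw [Equiv.Perm.mul_apply, rot_pow_val, hzv, Nat.zero_add, Nat.mod_eq_of_lt c.isLt]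
    refine Prod.ext h1 (Subtype.ext ?_)
    show (finRotate (m+1)) ^ _ * ((finRotate (m+1)) ^ _ * w) = w
    rw [← mul_assoc, ← pow_add, h1]
    have := c.isLt
    rw [show m + 1 - c.val + c.val = m + 1 by omega, rot_pow_top, one_mul]

lemma key (m : ℕ) :
    (m+1) ∣ Nat.card {σ : Equiv.Perm (Fin (m+2)) //
      avoidsSucc (m+2) σ ∧ containsN1 (m+2) σ} := by
  have e1 : {σ : Equiv.Perm (Fin (m+2)) // avoidsSucc (m+2) σ ∧ containsN1 (m+2) σ} ≃
      {w : Equiv.Perm (Fin (m+1)) // cycAvoid m w} :=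
    { toFun := fun s => ⟨conPerm s.1, con_avoid s.1 s.2.1 s.2.2⟩
      invFun := fun w => ⟨expPerm w.1, (exp_avoid w.1 w.2).1, (exp_avoid w.1 w.2).2⟩
      left_inv := fun s => Subtype.ext (exp_con s.1 s.2.1 s.2.2)
      right_inv := fun w => Subtype.ext (con_exp w.1) }
  rw [Nat.card_congr e1, Nat.card_congr (rotEquiv m), Nat.card_prod,
    Nat.card_eq_fintype_card (α := Fin (m+1)), Fintype.card_fin]
  exact Dvd.intro _ rfl

end Stmt19

theorem stmt_19 (n : ℕ) (hn : 2 ≤ n) :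
    (n - 1) ∣ Nat.card {σ : Equiv.Perm (Fin n) // avoidsSucc n σ ∧ containsN1 n σ} := by
  obtain ⟨m, rfl⟩ : ∃ m, n = m + 2 := ⟨n - 2, by omega⟩
  have h := Stmt19.key m
  simpa using h
end
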